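/- arXiv:2208.09101 — 5 statements merged into one kernel-verified Lean document; each statement's English description precedes it below -/
import Mathlib

section
/- Let (ι, A, I, z, x) be a GI datum, (ι', A, I, z', x') a Kramers–Wannier dual datum for it, and m ≥ 2 an integer. Then any two operators in the periodic bulk stabilizer set commute; in particular the duality relation (z α)·(x i) = (z' α)·(x' i) implies that every Z-suspension operator commutes with every X-suspension operator. -/
noncomputable section

/-- The `ZMod 2`-valued dot product `u·v = ∑ j, u j * v j`. -/
def dotp {ι : Type} [Fintype ι] (u v : ι → ZMod 2) : ZMod 2 := ∑ j, u j * v j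

/-- The X-type Pauli operator `X_u`: the permutation matrix with
`(X_u)_{s,t} = 1` iff `s = t + u`. -/
def Xop {ι : Type} [Fintype ι] (u : ι → ZMod 2) :
    Matrix (ι → ZMod 2) (ι → ZMod 2) ℂ :=
  Matrix.of fun s t => if s = t + u then 1 else 0

/-- The Z-type Pauli operator `Z_v`: the diagonal matrix with
`(Z_v)_{s,s} = (-1)^(v·s)`. -/
def Zop {ι : Type} [Fintype ι] (v : ι → ZMod 2) :
    Matrix (ι → ZMod 2) (ι → ZMod 2) ℂ :=
  Matrix.of fun s t => if s = t then (-1 : ℂ) ^ (dotp v s).val else 0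

/-- The standard inner product on the `ι`-qubit Hilbert space `(ι → ZMod 2) → ℂ`. -/
def qInner {ι : Type} [Fintype ι] [DecidableEq ι] (ψ φ : (ι → ZMod 2) → ℂ) : ℂ :=
  ∑ s, (starRingEnd ℂ) (ψ s) * φ s

/-- The subspace of vectors fixed by every operator in a given set of matrices. -/
def fixedSpace {ι : Type} [Fintype ι] [DecidableEq ι]
    (Ms : Set (Matrix (ι → ZMod 2) (ι → ZMod 2) ℂ)) :
    Submodule ℂ ((ι → ZMod 2) → ℂ) :=
  ⨅ M ∈ Ms, LinearMap.ker (Matrix.mulVecLin M - LinearMap.id)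
/-- The periodic bulk qubit type: `m` odd layers (copies of `ι`) and `m` even layers
(copies of `ι'`), cyclically arranged (odd layer `l` between even layers `l` and `l+1`). -/
abbrev BulkQ (m : ℕ) (ι ι' : Type) : Type := (ZMod m × ι) ⊕ (ZMod m × ι')

/-- `w@o_l`: the vector equal to `w` on odd layer `l` and `0` elsewhere. -/
def atOdd {m : ℕ} {ι ι' : Type} (l : ZMod m) (w : ι → ZMod 2) : BulkQ m ι ι' → ZMod 2
  | Sum.inl p => if p.1 = l then w p.2 else 0
  | Sum.inr _ => 0

/-- `w'@e_l`: the vector equal to `w'` on even layer `l` and `0` elsewhere. -/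
def atEven {m : ℕ} {ι ι' : Type} (l : ZMod m) (w' : ι' → ZMod 2) : BulkQ m ι ι' → ZMod 2
  | Sum.inl _ => 0
  | Sum.inr p => if p.1 = l then w' p.2 else 0

/-- The periodic bulk stabilizer set: Z-suspension operators, X-suspension operators,
and the layer-wise local/compatible symmetry operators of the GI datum and its dual. -/
def periodicBulkSet (m : ℕ) [NeZero m] (ι ι' A I : Type)
    [Fintype ι] [DecidableEq ι] [Fintype ι'] [DecidableEq ι'] [Fintype A] [Fintype I]
    (z : A → ι → ZMod 2) (x : I → ι → ZMod 2)
    (z' : A → ι' → ZMod 2) (x' : I → ι' → ZMod 2) :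
    Set (Matrix (BulkQ m ι ι' → ZMod 2) (BulkQ m ι ι' → ZMod 2) ℂ) :=
  {M | (∃ (α : A) (l : ZMod m),
          M = Zop (atEven l (z' α) + atOdd l (z α) + atEven (l + 1) (z' α))) ∨
       (∃ (i : I) (l : ZMod m),
          M = Xop (atOdd (l - 1) (x i) + atEven l (x' i) + atOdd l (x i))) ∨
       (∃ (l : ZMod m) (v : ι → ZMod 2),
          (∀ i, dotp v (x i) = 0) ∧ M = Zop (atOdd l v)) ∨
       (∃ (l : ZMod m) (u : ι → ZMod 2),
          (∀ α, dotp u (z α) = 0) ∧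
          (∀ v : ι → ZMod 2, (∀ i, dotp v (x i) = 0) → dotp u v = 0) ∧
          M = Xop (atOdd l u)) ∨
       (∃ (l : ZMod m) (u' : ι' → ZMod 2),
          (∀ α, dotp u' (z' α) = 0) ∧ M = Xop (atEven l u')) ∨
       (∃ (l : ZMod m) (v' : ι' → ZMod 2),
          v' ∈ Submodule.span (ZMod 2) (Set.range z') ∧
          (∀ i, dotp v' (x' i) = 0) ∧ M = Zop (atEven l v'))}
section Helpers

variable {ι : Type} [Fintype ι] [DecidableEq ι]

lemma dotp_comm (u v : ι → ZMod 2) : dotp u v = dotp v u := by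
  simp [dotp, mul_comm]

lemma dotp_add_left (u v w : ι → ZMod 2) :
    dotp (u + v) w = dotp u w + dotp v w := by
  simp [dotp, add_mul, Finset.sum_add_distrib]

lemma dotp_add_right (u v w : ι → ZMod 2) :
    dotp u (v + w) = dotp u v + dotp u w := by
  simp [dotp, mul_add, Finset.sum_add_distrib]

lemma dotp_smul_left (c : ZMod 2) (u v : ι → ZMod 2) :
    dotp (c • u) v = c * dotp u v := by
  simp [dotp, Finset.mul_sum, mul_assoc]

lemma dotp_span {u' : ι → ZMod 2} {S : Set (ι → ZMod 2)}
    (h : ∀ w ∈ S, dotp w u' = 0) {v'} (hv : v' ∈ Submodule.span (ZMod 2) S) :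
    dotp v' u' = 0 := by
  induction hv using Submodule.span_induction with
  | mem w hw => exact h w hw
  | zero => simp [dotp]
  | add a b _ _ ha hb => rw [dotp_add_left, ha, hb, add_zero]
  | smul c a _ ha => rw [dotp_smul_left, ha, mul_zero]

lemma Zop_mul_Zop_comm (v w : ι → ZMod 2) : Zop v * Zop w = Zop w * Zop v := by
  ext s t
  rw [Matrix.mul_apply, Matrix.mul_apply, Finset.sum_eq_single s,
    Finset.sum_eq_single s]
  · simp only [Zop, Matrix.of_apply, if_pos rfl]
    by_cases h : s = t
    · subst h; simp [mul_comm]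
    · simp [h]
  · intro k _ hk; simp [Zop, Ne.symm hk]
  · simp
  · intro k _ hk; simp [Zop, Ne.symm hk]
  · simp

lemma Xop_mul_Xop (u w : ι → ZMod 2) : Xop u * Xop w = Xop (w + u) := by
  ext s t
  rw [Matrix.mul_apply, Finset.sum_eq_single (t + w)]
  · simp [Xop, add_assoc]
  · intro k _ hk; simp [Xop, hk]
  · simp

lemma Xop_mul_Xop_comm (u w : ι → ZMod 2) : Xop u * Xop w = Xop w * Xop u := by
  rw [Xop_mul_Xop, Xop_mul_Xop, add_comm]

lemma Xop_mul_Zop_comm {v u : ι → ZMod 2} (h : dotp v u = 0) :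
    Xop u * Zop v = Zop v * Xop u := by
  ext s t
  rw [Matrix.mul_apply, Matrix.mul_apply, Finset.sum_eq_single t,
    Finset.sum_eq_single s]
  · simp only [Zop, Xop, Matrix.of_apply, if_pos rfl]
    by_cases hst : s = t + u
    · subst hst
      simp [dotp_add_right, h]
    · simp [hst]
  · intro k _ hk; simp [Zop, Ne.symm hk]
  · simp
  · intro k _ hk; simp [Zop, hk]
  · simp

end Helpers

section BulkHelpers

variable {m : ℕ} [NeZero m] {ι ι' : Type} [Fintype ι] [DecidableEq ι]
  [Fintype ι'] [DecidableEq ι']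

lemma dotp_atOdd_atOdd (l l' : ZMod m) (w w' : ι → ZMod 2) :
    dotp (atOdd l w : BulkQ m ι ι' → ZMod 2) (atOdd l' w')
      = if l = l' then dotp w w' else 0 := by
  simp only [dotp, Fintype.sum_sum_type, atOdd, mul_zero, Finset.sum_const_zero,
    add_zero, Fintype.sum_prod_type, ite_mul, zero_mul, mul_ite]
  rw [Finset.sum_eq_single l]
  · by_cases h : l = l' <;> simp [h]
  · intro k _ hk; simp [hk]
  · simp

lemma dotp_atEven_atEven (l l' : ZMod m) (w w' : ι' → ZMod 2) :
    dotp (atEven l w : BulkQ m ι ι' → ZMod 2) (atEven l' w')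
      = if l = l' then dotp w w' else 0 := by
  simp only [dotp, Fintype.sum_sum_type, atEven, mul_zero, zero_mul,
    Finset.sum_const_zero, zero_add, Fintype.sum_prod_type, ite_mul, mul_ite]
  rw [Finset.sum_eq_single l]
  · by_cases h : l = l' <;> simp [h]
  · intro k _ hk; simp [hk]
  · simp

lemma dotp_atOdd_atEven (l l' : ZMod m) (w : ι → ZMod 2) (w' : ι' → ZMod 2) :
    dotp (atOdd l w : BulkQ m ι ι' → ZMod 2) (atEven l' w') = 0 := by
  simp [dotp, Fintype.sum_sum_type, atOdd, atEven]

lemma dotp_atEven_atOdd (l l' : ZMod m) (w' : ι' → ZMod 2) (w : ι → ZMod 2) :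
    dotp (atEven l w' : BulkQ m ι ι' → ZMod 2) (atOdd l' w) = 0 := by
  simp [dotp, Fintype.sum_sum_type, atOdd, atEven]

lemma dot_susp_susp (l k : ZMod m) (a b : ι → ZMod 2) (a' b' : ι' → ZMod 2)
    (h : dotp a b = dotp a' b') :
    dotp (atEven l a' + atOdd l a + atEven (l + 1) a' : BulkQ m ι ι' → ZMod 2)
      (atOdd (k - 1) b + atEven k b' + atOdd k b) = 0 := by
  simp only [dotp_add_left, dotp_add_right, dotp_atOdd_atOdd, dotp_atEven_atEven,
    dotp_atOdd_atEven, dotp_atEven_atOdd, zero_add, add_zero, h, eq_sub_iff_add_eq]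
  split_ifs <;> first
    | rfl
    | (generalize dotp a' b' = c; revert c; decide)

lemma dot_susp_xodd (l k : ZMod m) (a : ι → ZMod 2) (a' : ι' → ZMod 2)
    (u : ι → ZMod 2) (h : dotp a u = 0) :
    dotp (atEven l a' + atOdd l a + atEven (l + 1) a' : BulkQ m ι ι' → ZMod 2)
      (atOdd k u) = 0 := by
  simp [dotp_add_left, dotp_atOdd_atOdd, dotp_atEven_atOdd, h]

lemma dot_susp_xeven (l k : ZMod m) (a : ι → ZMod 2) (a' : ι' → ZMod 2)
    (u' : ι' → ZMod 2) (h : dotp a' u' = 0) :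
    dotp (atEven l a' + atOdd l a + atEven (l + 1) a' : BulkQ m ι ι' → ZMod 2)
      (atEven k u') = 0 := by
  simp [dotp_add_left, dotp_atEven_atEven, dotp_atOdd_atEven, h]

lemma dot_zodd_xsusp (l k : ZMod m) (v b : ι → ZMod 2) (b' : ι' → ZMod 2)
    (h : dotp v b = 0) :
    dotp (atOdd l v : BulkQ m ι ι' → ZMod 2)
      (atOdd (k - 1) b + atEven k b' + atOdd k b) = 0 := by
  simp [dotp_add_right, dotp_atOdd_atOdd, dotp_atOdd_atEven, h]

lemma dot_zodd_xodd (l k : ZMod m) (v u : ι → ZMod 2) (h : dotp v u = 0) :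
    dotp (atOdd l v : BulkQ m ι ι' → ZMod 2) (atOdd k u) = 0 := by
  simp [dotp_atOdd_atOdd, h]

lemma dot_zeven_xsusp (l k : ZMod m) (b : ι → ZMod 2) (v' b' : ι' → ZMod 2)
    (h : dotp v' b' = 0) :
    dotp (atEven l v' : BulkQ m ι ι' → ZMod 2)
      (atOdd (k - 1) b + atEven k b' + atOdd k b) = 0 := by
  simp [dotp_add_right, dotp_atEven_atEven, dotp_atEven_atOdd, h]

lemma dot_zeven_xeven (l k : ZMod m) (v' u' : ι' → ZMod 2) (h : dotp v' u' = 0) :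
    dotp (atEven l v' : BulkQ m ι ι' → ZMod 2) (atEven k u') = 0 := by
  simp [dotp_atEven_atEven, h]

end BulkHelpers

/-- all operators in the periodic bulk stabilizer set pairwise commute. -/
theorem statement12 (m : ℕ) [NeZero m] (hm : 2 ≤ m) (ι ι' A I : Type)
    [Fintype ι] [DecidableEq ι] [Fintype ι'] [DecidableEq ι'] [Fintype A] [Fintype I]
    (z : A → ι → ZMod 2) (x : I → ι → ZMod 2)
    (z' : A → ι' → ZMod 2) (x' : I → ι' → ZMod 2)
    (hdual : ∀ (α : A) (i : I), dotp (z α) (x i) = dotp (z' α) (x' i)) :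
    ∀ M ∈ periodicBulkSet m ι ι' A I z x z' x',
      ∀ M' ∈ periodicBulkSet m ι ι' A I z x z' x', M * M' = M' * M := by
  rintro M hM M' hM'
  obtain (⟨α, l, rfl⟩ | ⟨i, l, rfl⟩ | ⟨l, v, hv, rfl⟩ | ⟨l, u, hu1, hu2, rfl⟩ |
      ⟨l, u', hu', rfl⟩ | ⟨l, v', hsp, hv', rfl⟩) := hM <;>
    obtain (⟨β, k, rfl⟩ | ⟨j, k, rfl⟩ | ⟨k, w, hw, rfl⟩ | ⟨k, q, hq1, hq2, rfl⟩ |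
        ⟨k, q', hq', rfl⟩ | ⟨k, w', hsp', hw', rfl⟩) := hM'
  -- M = Z-suspension
  · exact Zop_mul_Zop_comm _ _
  · exact (Xop_mul_Zop_comm (dot_susp_susp l k _ _ _ _ (hdual α j))).symm
  · exact Zop_mul_Zop_comm _ _
  · exact (Xop_mul_Zop_comm (dot_susp_xodd l k _ _ _
      (by rw [dotp_comm]; exact hq1 α))).symm
  · exact (Xop_mul_Zop_comm (dot_susp_xeven l k _ _ _
      (by rw [dotp_comm]; exact hq' α))).symm
  · exact Zop_mul_Zop_comm _ _
  -- M = X-suspension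
  · exact Xop_mul_Zop_comm (dot_susp_susp k l _ _ _ _ (hdual β i))
  · exact Xop_mul_Xop_comm _ _
  · exact Xop_mul_Zop_comm (dot_zodd_xsusp k l _ _ _ (hw i))
  · exact Xop_mul_Xop_comm _ _
  · exact Xop_mul_Xop_comm _ _
  · exact Xop_mul_Zop_comm (dot_zeven_xsusp k l _ _ _ (hw' i))
  -- M = Zop (atOdd l v)
  · exact Zop_mul_Zop_comm _ _
  · exact (Xop_mul_Zop_comm (dot_zodd_xsusp l k _ _ _ (hv j))).symm
  · exact Zop_mul_Zop_comm _ _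
  · exact (Xop_mul_Zop_comm (dot_zodd_xodd l k _ _
      (by rw [dotp_comm]; exact hq2 v hv))).symm
  · exact (Xop_mul_Zop_comm (dotp_atOdd_atEven l k v q')).symm
  · exact Zop_mul_Zop_comm _ _
  -- M = Xop (atOdd l u)
  · exact Xop_mul_Zop_comm (dot_susp_xodd k l _ _ _
      (by rw [dotp_comm]; exact hu1 β))
  · exact Xop_mul_Xop_comm _ _
  · exact Xop_mul_Zop_comm (dot_zodd_xodd k l _ _
      (by rw [dotp_comm]; exact hu2 w hw))
  · exact Xop_mul_Xop_comm _ _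
  · exact Xop_mul_Xop_comm _ _
  · exact Xop_mul_Zop_comm (dotp_atEven_atOdd k l w' u)
  -- M = Xop (atEven l u')
  · exact Xop_mul_Zop_comm (dot_susp_xeven k l _ _ _
      (by rw [dotp_comm]; exact hu' β))
  · exact Xop_mul_Xop_comm _ _
  · exact Xop_mul_Zop_comm (dotp_atOdd_atEven k l w u')
  · exact Xop_mul_Xop_comm _ _
  · exact Xop_mul_Xop_comm _ _
  · exact Xop_mul_Zop_comm (dot_zeven_xeven k l _ _
      (dotp_span (by rintro b ⟨γ, rfl⟩; rw [dotp_comm]; exact hu' γ) hsp'))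
  -- M = Zop (atEven l v')
  · exact Zop_mul_Zop_comm _ _
  · exact (Xop_mul_Zop_comm (dot_zeven_xsusp l k _ _ _ (hv' j))).symm
  · exact Zop_mul_Zop_comm _ _
  · exact (Xop_mul_Zop_comm (dotp_atEven_atOdd l k v' q)).symm
  · exact (Xop_mul_Zop_comm (dot_zeven_xeven l k _ _
      (dotp_span (by rintro b ⟨γ, rfl⟩; rw [dotp_comm]; exact hq' γ) hsp))).symm
  · exact Zop_mul_Zop_comm _ _
end
end

section
/- Let (ι, A, I, z, x) be a GI datum, (ι', A, I, z', x') a Kramers–Wannier dual datum for it, m ≥ 1 an integer, l₀ a fixed even-layer index with 1 ≤ l₀ ≤ m, and Q the open bulk qubit type. For all a, b : Q → ZMod 2, if the operator X_a Z_b commutes with every operator in the open bulk generating set, then there exist ε ∈ {1, −1} and a finite list of operators from the open bulk generating set whose product equals ε · X_a Z_b. -/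
noncomputable section

/-- The open bulk qubit type: `m+1` odd layers `o_1, …, o_{m+1}` (copies of `ι`) and
`m` even layers `e_1, …, e_m` (copies of `ι'`), with `e_l` between `o_l` and `o_{l+1}`. -/
abbrev OpenQ (m : ℕ) (ι ι' : Type) : Type := (Fin (m + 1) × ι) ⊕ (Fin m × ι')

/-- `w@o_l` (1-based layer index `l`): equal to `w` on odd layer `o_l`, `0` elsewhere. -/
def atOddO {m : ℕ} {ι ι' : Type} (l : ℕ) (w : ι → ZMod 2) : OpenQ m ι ι' → ZMod 2
  | Sum.inl p => if (p.1 : ℕ) + 1 = l then w p.2 else 0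
  | Sum.inr _ => 0

/-- `w'@e_l` (1-based layer index `l`): equal to `w'` on even layer `e_l`, `0` elsewhere. -/
def atEvenO {m : ℕ} {ι ι' : Type} (l : ℕ) (w' : ι' → ZMod 2) : OpenQ m ι ι' → ZMod 2
  | Sum.inl _ => 0
  | Sum.inr p => if (p.1 : ℕ) + 1 = l then w' p.2 else 0

/-- The open bulk generating set: boundary `X` operators on `o_1` and `o_{m+1}`,
X-suspension and Z-suspension operators, layer-wise Z-type symmetries on odd layers,
X-type symmetries on even layers, and compatible Z-type symmetries on the fixed even
layer `e_{l₀}`. -/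
def openBulkSet (m l₀ : ℕ) (ι ι' A I : Type)
    [Fintype ι] [DecidableEq ι] [Fintype ι'] [DecidableEq ι'] [Fintype A] [Fintype I]
    (z : A → ι → ZMod 2) (x : I → ι → ZMod 2)
    (z' : A → ι' → ZMod 2) (x' : I → ι' → ZMod 2) :
    Set (Matrix (OpenQ m ι ι' → ZMod 2) (OpenQ m ι ι' → ZMod 2) ℂ) :=
  {M | (∃ i : I, M = Xop (atOddO 1 (x i)) ∨ M = Xop (atOddO (m + 1) (x i))) ∨
       (∃ (i : I) (l : ℕ), 1 ≤ l ∧ l ≤ m ∧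
          M = Xop (atOddO l (x i) + atEvenO l (x' i) + atOddO (l + 1) (x i))) ∨
       (∃ (α : A) (l : ℕ), 2 ≤ l ∧ l ≤ m ∧
          M = Zop (atEvenO (l - 1) (z' α) + atOddO l (z α) + atEvenO l (z' α))) ∨
       (∃ (l : ℕ) (v : ι → ZMod 2), 1 ≤ l ∧ l ≤ m + 1 ∧
          (∀ i, dotp v (x i) = 0) ∧ M = Zop (atOddO l v)) ∨
       (∃ (l : ℕ) (u' : ι' → ZMod 2), 1 ≤ l ∧ l ≤ m ∧
          (∀ α, dotp u' (z' α) = 0) ∧ M = Xop (atEvenO l u')) ∨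
       (∃ v' : ι' → ZMod 2, v' ∈ Submodule.span (ZMod 2) (Set.range z') ∧
          (∀ i, dotp v' (x' i) = 0) ∧ M = Zop (atEvenO l₀ v'))}
set_option linter.unusedSectionVars false
set_option linter.unreachableTactic false
set_option linter.unusedTactic false
set_option maxHeartbeats 1000000

namespace St14

variable {n : Type} [Fintype n] [DecidableEq n]
lemma dotp_comm (u v : n → ZMod 2) : dotp u v = dotp v u := by
  unfold dotp; exact Finset.sum_congr rfl fun j _ => mul_comm _ _
lemma dotp_add_left (u v w : n → ZMod 2) : dotp (u + v) w = dotp u w + dotp v w := by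
  unfold dotp; rw [← Finset.sum_add_distrib]; exact Finset.sum_congr rfl fun j _ => by
    simp [add_mul]
lemma dotp_add_right (u v w : n → ZMod 2) : dotp u (v + w) = dotp u v + dotp u w := by
  rw [dotp_comm, dotp_add_left, dotp_comm v u, dotp_comm w u]
lemma dotp_zero_left (v : n → ZMod 2) : dotp 0 v = 0 := by simp [dotp]
lemma dotp_zero_right (v : n → ZMod 2) : dotp v 0 = 0 := by simp [dotp]
lemma dotp_smul_left (c : ZMod 2) (u v : n → ZMod 2) : dotp (c • u) v = c * dotp u v := by
  unfold dotp; rw [Finset.mul_sum]; exact Finset.sum_congr rfl fun j _ => by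
    simp [mul_assoc]
lemma dotp_sum_left {γ : Type*} (s : Finset γ) (f : γ → n → ZMod 2) (v : n → ZMod 2) :
    dotp (∑ i ∈ s, f i) v = ∑ i ∈ s, dotp (f i) v := by
  classical
  induction s using Finset.induction with
  | empty => simp [dotp_zero_left]
  | insert _ _ h ih => rw [Finset.sum_insert h, Finset.sum_insert h, dotp_add_left, ih]
lemma mem_of_forall_dotp (T : Submodule (ZMod 2) (n → ZMod 2)) (u : n → ZMod 2)
    (h : ∀ v, (∀ t ∈ T, dotp t v = 0) → dotp u v = 0) : u ∈ T := by
  by_contra hu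
  obtain ⟨f, hfu, hfT⟩ := Submodule.exists_dual_map_eq_bot_of_notMem hu inferInstance
  set v : n → ZMod 2 := fun j => f (Pi.single j 1) with hv
  have hrep : ∀ t : n → ZMod 2, f t = dotp t v := by
    intro t
    have ht : t = ∑ j, t j • Pi.single j (1 : ZMod 2) := by
      funext k; rw [Finset.sum_apply]; simp [Pi.single_apply]
    calc f t = f (∑ j, t j • Pi.single j (1 : ZMod 2)) := by rw [← ht]
    _ = ∑ j, t j • f (Pi.single j (1:ZMod 2)) := by rw [map_sum]; simp
    _ = dotp t v := by simp [dotp, hv, smul_eq_mul]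
  have hTv : ∀ t ∈ T, dotp t v = 0 := by
    intro t ht
    have : f t ∈ T.map f := Submodule.mem_map_of_mem ht
    rw [hfT] at this
    simpa [hrep t] using this
  exact hfu (by rw [hrep]; exact h v hTv)

lemma mem_span_range_of_dotp {I : Type} [Fintype I] (x : I → n → ZMod 2) (u : n → ZMod 2)
    (h : ∀ v, (∀ i, dotp v (x i) = 0) → dotp u v = 0) :
    u ∈ Submodule.span (ZMod 2) (Set.range x) := by
  apply mem_of_forall_dotp
  intro v hv
  apply h
  intro i
  rw [dotp_comm]
  exact hv (x i) (Submodule.subset_span (Set.mem_range_self i))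

/-- the perp of a family, as a submodule -/
def perpSub {A : Type} (z' : A → n → ZMod 2) : Submodule (ZMod 2) (n → ZMod 2) where
  carrier := {v | ∀ α, dotp v (z' α) = 0}
  add_mem' := by intro a b ha hb α; rw [dotp_add_left, ha α, hb α, add_zero]
  zero_mem' := fun α => dotp_zero_left _
  smul_mem' := by intro c a ha α; rw [dotp_smul_left, ha α, mul_zero]

lemma perp_inter_decomp {A I : Type} [Fintype A] [Fintype I]
    (z' : A → n → ZMod 2) (x' : I → n → ZMod 2) (u : n → ZMod 2)
    (h : ∀ v', v' ∈ Submodule.span (ZMod 2) (Set.range z') → (∀ i, dotp v' (x' i) = 0) →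
      dotp u v' = 0) :
    ∃ u₀ w, u = u₀ + w ∧ (∀ α, dotp u₀ (z' α) = 0) ∧
      w ∈ Submodule.span (ZMod 2) (Set.range x') := by
  have hmem : u ∈ perpSub z' ⊔ Submodule.span (ZMod 2) (Set.range x') := by
    apply mem_of_forall_dotp
    intro v hv
    apply h
    · apply mem_span_range_of_dotp
      intro w hw
      rw [dotp_comm]
      exact hv w (Submodule.mem_sup_left (by exact hw))
    · intro i
      rw [dotp_comm]
      exact hv (x' i) (Submodule.mem_sup_right (Submodule.subset_span (Set.mem_range_self i)))
  obtain ⟨u₀, hu₀, w, hw, huw⟩ := Submodule.mem_sup.mp hmem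
  exact ⟨u₀, w, huw.symm, hu₀, hw⟩

/-! Pauli algebra -/

lemma zmod2_cases : ∀ e : ZMod 2, e = 0 ∨ e = 1 := by decide

lemma val_zmod2_00 : ((0:ZMod 2) + 0).val = 0 := by decide
lemma val_zmod2_01 : ((0:ZMod 2) + 1).val = 1 := by decide
lemma val_zmod2_10 : ((1:ZMod 2) + 0).val = 1 := by decide
lemma val_zmod2_11 : ((1:ZMod 2) + 1).val = 0 := by decide
lemma val_zmod2_0 : (0:ZMod 2).val = 0 := by decide
lemma val_zmod2_2 : (2:ZMod 2).val = 0 := by decide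
lemma val_zmod2_1 : (1:ZMod 2).val = 1 := by decide

lemma neg_one_pow_val_add (e f : ZMod 2) :
    ((-1:ℂ)) ^ ((e + f).val) = (-1) ^ e.val * (-1) ^ f.val := by
  rcases zmod2_cases e with he | he <;> rcases zmod2_cases f with hf | hf <;>
    subst he <;> subst hf <;>
    norm_num [val_zmod2_00, val_zmod2_01, val_zmod2_10, val_zmod2_11, val_zmod2_0, val_zmod2_1, val_zmod2_2]

lemma neg_one_pow_inj (e f : ZMod 2) (h : ((-1:ℂ)) ^ e.val = (-1) ^ f.val) : e = f := by
  rcases zmod2_cases e with he | he <;> rcases zmod2_cases f with hf | hf <;>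
    subst he <;> subst hf <;>
    first
      | rfl
      | (exfalso; rw [val_zmod2_0, val_zmod2_1] at h; norm_num at h)
      | (exfalso; rw [val_zmod2_1, val_zmod2_0] at h; norm_num at h)

lemma XZ_apply (u v : n → ZMod 2) (s t : n → ZMod 2) :
    (Xop u * Zop v) s t = if s = t + u then (-1:ℂ) ^ (dotp v t).val else 0 := by
  rw [Matrix.mul_apply]
  rw [Finset.sum_eq_single t]
  · simp only [Xop, Zop, Matrix.of_apply, if_pos rfl]
    split_ifs with h
    · rw [one_mul]
    · rw [zero_mul]
  · intro r _ hr
    simp only [Xop, Zop, Matrix.of_apply]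
    rw [if_neg hr, mul_zero]
  · intro ht; exact absurd (Finset.mem_univ t) ht

lemma mul_XZ (a b c d : n → ZMod 2) :
    (Xop a * Zop b) * (Xop c * Zop d)
      = ((-1:ℂ) ^ ((dotp b c).val)) • (Xop (a + c) * Zop (b + d)) := by
  ext s t
  rw [Matrix.mul_apply, Matrix.smul_apply, XZ_apply]
  rw [Finset.sum_eq_single (t + c)]
  · rw [XZ_apply, XZ_apply]
    have hc : (s = t + c + a) ↔ (s = t + (a + c)) := by
      constructor <;> intro h <;> rw [h] <;> abel
    by_cases h : s = t + (a + c)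
    · rw [if_pos (hc.mpr h), if_pos h, if_pos rfl, dotp_add_right, neg_one_pow_val_add,
        dotp_add_left, neg_one_pow_val_add]
      simp only [smul_eq_mul]
      ring
    · rw [if_neg (fun hh => h (hc.mp hh)), if_pos rfl, if_neg h, zero_mul, smul_zero]
  · intro r _ hr
    rw [XZ_apply, XZ_apply, if_neg (fun hh : r = t + c => hr hh), mul_zero]
  · intro ht; exact absurd (Finset.mem_univ _) ht

lemma Xop_zero : Xop (0 : n → ZMod 2) = 1 := by
  ext s t
  simp [Xop, Matrix.one_apply, eq_comm]

lemma Zop_zero : Zop (0 : n → ZMod 2) = 1 := by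
  ext s t
  simp [Zop, Matrix.one_apply, dotp_zero_left]

lemma Xop_mul_Xop (u w : n → ZMod 2) : Xop u * Xop w = Xop (u + w) := by
  have h := mul_XZ u 0 w (0 : n → ZMod 2)
  simpa [Zop_zero, dotp_zero_left, add_zero] using h

lemma Zop_mul_Zop (v w : n → ZMod 2) : Zop v * Zop w = Zop (v + w) := by
  have h := mul_XZ (0 : n → ZMod 2) v 0 w
  simpa [Xop_zero, dotp_zero_right] using h

lemma XZ_entry_one (u v : n → ZMod 2) : (Xop u * Zop v) u 0 = 1 := by
  rw [XZ_apply, if_pos (by rw [zero_add]), dotp_zero_right]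
  norm_num

lemma XZ_comm_iff (a b c d : n → ZMod 2) :
    (Xop a * Zop b) * (Xop c * Zop d) = (Xop c * Zop d) * (Xop a * Zop b)
      ↔ dotp b c = dotp d a := by
  rw [mul_XZ, mul_XZ]
  rw [show c + a = a + c from add_comm c a, show d + b = b + d from add_comm d b]
  constructor
  · intro h
    apply neg_one_pow_inj
    have := congrFun (congrFun h (a + c)) 0
    rw [Matrix.smul_apply, Matrix.smul_apply, XZ_entry_one] at this
    simpa using this
  · intro h; rw [h]




lemma addself {γ : Type*} (g : γ → ZMod 2) : g + g = 0 := by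
  funext i
  have : ∀ e : ZMod 2, e + e = 0 := by decide
  exact this (g i)

lemma addself' (e : ZMod 2) : e + e = 0 := by
  have : ∀ e : ZMod 2, e + e = 0 := by decide
  exact this e

section layers
variable {m : ℕ} {ι ι' : Type} [Fintype ι] [DecidableEq ι] [Fintype ι'] [DecidableEq ι']

def rO (u : OpenQ m ι ι' → ZMod 2) (L : ℕ) : ι → ZMod 2 :=
  fun j => if h : 1 ≤ L ∧ L ≤ m + 1 then u (Sum.inl (⟨L - 1, by omega⟩, j)) else 0

def rE (u : OpenQ m ι ι' → ZMod 2) (K : ℕ) : ι' → ZMod 2 :=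
  fun j => if h : 1 ≤ K ∧ K ≤ m then u (Sum.inr (⟨K - 1, by omega⟩, j)) else 0

lemma rO_val (u : OpenQ m ι ι' → ZMod 2) (p : Fin (m+1)) (j : ι) :
    rO u ((p : ℕ) + 1) j = u (Sum.inl (p, j)) := by
  unfold rO
  rw [dif_pos ⟨by omega, by have := p.isLt; omega⟩]
  congr

lemma rE_val (u : OpenQ m ι ι' → ZMod 2) (p : Fin m) (j : ι') :
    rE u ((p : ℕ) + 1) j = u (Sum.inr (p, j)) := by
  unfold rE
  rw [dif_pos ⟨by omega, by have := p.isLt; omega⟩]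
  congr

lemma rO_zero (u : OpenQ m ι ι' → ZMod 2) (L : ℕ) (h : ¬(1 ≤ L ∧ L ≤ m + 1)) :
    rO u L = 0 := by funext j; unfold rO; rw [dif_neg h]; rfl

lemma rE_zero (u : OpenQ m ι ι' → ZMod 2) (K : ℕ) (h : ¬(1 ≤ K ∧ K ≤ m)) :
    rE u K = 0 := by funext j; unfold rE; rw [dif_neg h]; rfl

lemma dotp_atOddO (u : OpenQ m ι ι' → ZMod 2) (L : ℕ) (w : ι → ZMod 2) :
    dotp u (atOddO L w) = dotp (rO u L) w := by
  unfold dotp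
  rw [Fintype.sum_sum_type]
  have h2 : ∑ p : Fin m × ι', u (Sum.inr p) * atOddO L w (Sum.inr p) = 0 := by
    apply Finset.sum_eq_zero; intro p _; simp [atOddO]
  rw [h2, add_zero, Fintype.sum_prod_type]
  by_cases h : 1 ≤ L ∧ L ≤ m + 1
  · have hbd : L - 1 < m + 1 := by omega
    have hk : ∀ k : Fin (m + 1), ((k : ℕ) + 1 = L) ↔ k = ⟨L - 1, hbd⟩ := by
      intro k
      constructor
      · intro hkl; apply Fin.ext; simp; omega
      · intro hkl; subst hkl; simp; omega
    calc ∑ k : Fin (m+1), ∑ j, u (Sum.inl (k, j)) * atOddO L w (Sum.inl (k, j))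
        = ∑ k : Fin (m+1), if k = ⟨L - 1, hbd⟩ then ∑ j, u (Sum.inl (k, j)) * w j else 0 := by
          apply Finset.sum_congr rfl
          intro k _
          by_cases hc : k = ⟨L - 1, hbd⟩
          · rw [if_pos hc]
            apply Finset.sum_congr rfl; intro j _
            simp only [atOddO]
            rw [if_pos ((hk k).mpr hc)]
          · rw [if_neg hc]
            apply Finset.sum_eq_zero; intro j _
            simp only [atOddO]
            rw [if_neg (fun hh => hc ((hk k).mp hh)), mul_zero]
      _ = ∑ j, u (Sum.inl (⟨L - 1, hbd⟩, j)) * w j := by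
          rw [Finset.sum_ite_eq' Finset.univ, if_pos (Finset.mem_univ _)]
      _ = ∑ j, rO u L j * w j := by
          apply Finset.sum_congr rfl; intro j _
          unfold rO; rw [dif_pos h]
  · rw [rO_zero u L h]
    have : ∀ k : Fin (m+1), ¬((k : ℕ) + 1 = L) := by
      intro k; have := k.isLt; omega
    simp only [Pi.zero_apply, zero_mul, Finset.sum_const_zero]
    apply Finset.sum_eq_zero; intro k _
    apply Finset.sum_eq_zero; intro j _
    simp only [atOddO]
    rw [if_neg (this k), mul_zero]

lemma dotp_atEvenO (u : OpenQ m ι ι' → ZMod 2) (K : ℕ) (w : ι' → ZMod 2) :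
    dotp u (atEvenO K w) = dotp (rE u K) w := by
  unfold dotp
  rw [Fintype.sum_sum_type]
  have h2 : ∑ p : Fin (m+1) × ι, u (Sum.inl p) * atEvenO K w (Sum.inl p) = 0 := by
    apply Finset.sum_eq_zero; intro p _; simp [atEvenO]
  rw [h2, zero_add, Fintype.sum_prod_type]
  by_cases h : 1 ≤ K ∧ K ≤ m
  · have hbd : K - 1 < m := by omega
    have hk : ∀ k : Fin m, ((k : ℕ) + 1 = K) ↔ k = ⟨K - 1, hbd⟩ := by
      intro k
      constructor
      · intro hkl; apply Fin.ext; simp; omega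
      · intro hkl; subst hkl; simp; omega
    calc ∑ k : Fin m, ∑ j, u (Sum.inr (k, j)) * atEvenO K w (Sum.inr (k, j))
        = ∑ k : Fin m, if k = ⟨K - 1, hbd⟩ then ∑ j, u (Sum.inr (k, j)) * w j else 0 := by
          apply Finset.sum_congr rfl
          intro k _
          by_cases hc : k = ⟨K - 1, hbd⟩
          · rw [if_pos hc]
            apply Finset.sum_congr rfl; intro j _
            simp only [atEvenO]
            rw [if_pos ((hk k).mpr hc)]
          · rw [if_neg hc]
            apply Finset.sum_eq_zero; intro j _
            simp only [atEvenO]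
            rw [if_neg (fun hh => hc ((hk k).mp hh)), mul_zero]
      _ = ∑ j, u (Sum.inr (⟨K - 1, hbd⟩, j)) * w j := by
          rw [Finset.sum_ite_eq' Finset.univ, if_pos (Finset.mem_univ _)]
      _ = ∑ j, rE u K j * w j := by
          apply Finset.sum_congr rfl; intro j _
          unfold rE; rw [dif_pos h]
  · rw [rE_zero u K h]
    have : ∀ k : Fin m, ¬((k : ℕ) + 1 = K) := by
      intro k; have := k.isLt; omega
    simp only [Pi.zero_apply, zero_mul, Finset.sum_const_zero]
    apply Finset.sum_eq_zero; intro k _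
    apply Finset.sum_eq_zero; intro j _
    simp only [atEvenO]
    rw [if_neg (this k), mul_zero]

/-- linearity of `atOddO` in the vector argument, for finite combinations -/
lemma atOddO_sum {γ : Type*} (s : Finset γ) (c : γ → ZMod 2) (w : γ → ι → ZMod 2) (L : ℕ) :
    (atOddO (m := m) (ι' := ι') L (∑ i ∈ s, c i • w i)) = ∑ i ∈ s, c i • atOddO L (w i) := by
  funext q
  rw [Finset.sum_apply]
  cases q with
  | inl p =>
    simp only [atOddO]
    by_cases hc : (p.1 : ℕ) + 1 = L
    · rw [if_pos hc, Finset.sum_apply]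
      apply Finset.sum_congr rfl; intro i _
      simp only [Pi.smul_apply, smul_eq_mul, atOddO]
      rw [if_pos hc]
    · rw [if_neg hc]
      symm; apply Finset.sum_eq_zero; intro i _
      simp only [Pi.smul_apply, smul_eq_mul, atOddO]
      rw [if_neg hc, mul_zero]
  | inr p =>
    simp only [atOddO]
    symm; apply Finset.sum_eq_zero; intro i _
    simp only [Pi.smul_apply, smul_eq_mul, atOddO]
    rw [mul_zero]

lemma atEvenO_sum {γ : Type*} (s : Finset γ) (c : γ → ZMod 2) (w : γ → ι' → ZMod 2) (K : ℕ) :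
    (atEvenO (m := m) (ι := ι) K (∑ i ∈ s, c i • w i)) = ∑ i ∈ s, c i • atEvenO K (w i) := by
  funext q
  rw [Finset.sum_apply]
  cases q with
  | inr p =>
    simp only [atEvenO]
    by_cases hc : (p.1 : ℕ) + 1 = K
    · rw [if_pos hc, Finset.sum_apply]
      apply Finset.sum_congr rfl; intro i _
      simp only [Pi.smul_apply, smul_eq_mul, atEvenO]
      rw [if_pos hc]
    · rw [if_neg hc]
      symm; apply Finset.sum_eq_zero; intro i _
      simp only [Pi.smul_apply, smul_eq_mul, atEvenO]
      rw [if_neg hc, mul_zero]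
  | inl p =>
    simp only [atEvenO]
    symm; apply Finset.sum_eq_zero; intro i _
    simp only [Pi.smul_apply, smul_eq_mul, atEvenO]
    rw [mul_zero]

/-! evaluation of sums of layered vectors -/

lemma sum_atOddO_inl (s : Finset ℕ) (f : ℕ → ι → ZMod 2) (p : Fin (m+1)) (j : ι) :
    (∑ l ∈ s, atOddO (m := m) (ι' := ι') l (f l)) (Sum.inl (p, j))
      = if (p : ℕ) + 1 ∈ s then f ((p : ℕ) + 1) j else 0 := by
  rw [Finset.sum_apply]
  rw [show (∑ l ∈ s, atOddO (m := m) (ι' := ι') l (f l) (Sum.inl (p, j)))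
      = ∑ l ∈ s, if (p : ℕ) + 1 = l then f l j else 0 from rfl]
  rw [Finset.sum_ite_eq s ((p:ℕ)+1) (fun l => f l j)]

lemma sum_atOddO_inr (s : Finset ℕ) (f : ℕ → ι → ZMod 2) (p : Fin m) (j : ι') :
    (∑ l ∈ s, atOddO (m := m) (ι' := ι') l (f l)) (Sum.inr (p, j)) = 0 := by
  rw [Finset.sum_apply]
  apply Finset.sum_eq_zero; intro l _; rfl

lemma sum_atEvenO_inr (s : Finset ℕ) (f : ℕ → ι' → ZMod 2) (p : Fin m) (j : ι') :
    (∑ l ∈ s, atEvenO (m := m) (ι := ι) l (f l)) (Sum.inr (p, j))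
      = if (p : ℕ) + 1 ∈ s then f ((p : ℕ) + 1) j else 0 := by
  rw [Finset.sum_apply]
  rw [show (∑ l ∈ s, atEvenO (m := m) (ι := ι) l (f l) (Sum.inr (p, j)))
      = ∑ l ∈ s, if (p : ℕ) + 1 = l then f l j else 0 from rfl]
  rw [Finset.sum_ite_eq s ((p:ℕ)+1) (fun l => f l j)]

lemma sum_atEvenO_inl (s : Finset ℕ) (f : ℕ → ι' → ZMod 2) (p : Fin (m+1)) (j : ι) :
    (∑ l ∈ s, atEvenO (m := m) (ι := ι) l (f l)) (Sum.inl (p, j)) = 0 := by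
  rw [Finset.sum_apply]
  apply Finset.sum_eq_zero; intro l _; rfl

lemma atOddO_inl (l : ℕ) (w : ι → ZMod 2) (p : Fin (m+1)) (j : ι) :
    atOddO (m := m) (ι' := ι') l w (Sum.inl (p, j)) = if (p : ℕ) + 1 = l then w j else 0 := rfl
lemma atOddO_inr (l : ℕ) (w : ι → ZMod 2) (p : Fin m) (j : ι') :
    atOddO (m := m) (ι' := ι') l w (Sum.inr (p, j)) = 0 := rfl
lemma atEvenO_inr (l : ℕ) (w : ι' → ZMod 2) (p : Fin m) (j : ι') :
    atEvenO (m := m) (ι := ι) l w (Sum.inr (p, j)) = if (p : ℕ) + 1 = l then w j else 0 := rfl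
lemma atEvenO_inl (l : ℕ) (w : ι' → ZMod 2) (p : Fin (m+1)) (j : ι) :
    atEvenO (m := m) (ι := ι) l w (Sum.inl (p, j)) = 0 := rfl

end layers

/-- telescoping sums in characteristic two -/
lemma telescope2 (g : ℕ → ZMod 2) : ∀ mm : ℕ, 1 ≤ mm →
    ∑ K ∈ Finset.Icc 1 mm, (g K + g (K+1)) = g 1 + g (mm+1) := by
  intro mm hmm
  induction mm, hmm using Nat.le_induction with
  | base => simp
  | succ mm hmm ih =>
    rw [Finset.sum_Icc_succ_top (by omega), ih]
    have : g (mm+1) + g (mm+1) = 0 := addself' _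
    linear_combination this



section layers2
variable {m : ℕ} {ι ι' : Type} [Fintype ι] [DecidableEq ι] [Fintype ι'] [DecidableEq ι']

lemma sum_atOddO_succ_inl (s : Finset ℕ) (f : ℕ → ι → ZMod 2) (p : Fin (m+1)) (j : ι) :
    (∑ l ∈ s, atOddO (m := m) (ι' := ι') (l+1) (f l)) (Sum.inl (p, j))
      = if (p : ℕ) ∈ s then f (p : ℕ) j else 0 := by
  rw [Finset.sum_apply]
  rw [show (∑ l ∈ s, atOddO (m := m) (ι' := ι') (l+1) (f l) (Sum.inl (p, j)))
      = ∑ l ∈ s, if (p : ℕ) + 1 = l + 1 then f l j else 0 from rfl]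
  have hcong : ∀ l ∈ s, (if (p:ℕ) + 1 = l + 1 then f l j else 0)
      = (if (p:ℕ) = l then f l j else 0) := by
    intro l _
    by_cases h : (p:ℕ) = l
    · rw [if_pos h, if_pos (by omega)]
    · rw [if_neg h, if_neg (by omega)]
  rw [Finset.sum_congr rfl hcong]
  rw [Finset.sum_ite_eq s ((p:ℕ)) (fun l => f l j)]

lemma sum_atEvenO_succ_inr (s : Finset ℕ) (f : ℕ → ι' → ZMod 2) (p : Fin m) (j : ι') :
    (∑ l ∈ s, atEvenO (m := m) (ι := ι) (l+1) (f l)) (Sum.inr (p, j))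
      = if (p : ℕ) ∈ s then f (p : ℕ) j else 0 := by
  rw [Finset.sum_apply]
  rw [show (∑ l ∈ s, atEvenO (m := m) (ι := ι) (l+1) (f l) (Sum.inr (p, j)))
      = ∑ l ∈ s, if (p : ℕ) + 1 = l + 1 then f l j else 0 from rfl]
  have hcong : ∀ l ∈ s, (if (p:ℕ) + 1 = l + 1 then f l j else 0)
      = (if (p:ℕ) = l then f l j else 0) := by
    intro l _
    by_cases h : (p:ℕ) = l
    · rw [if_pos h, if_pos (by omega)]
    · rw [if_neg h, if_neg (by omega)]
  rw [Finset.sum_congr rfl hcong]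
  rw [Finset.sum_ite_eq s ((p:ℕ)) (fun l => f l j)]

lemma sum_atEvenO_inl2 (s : Finset ℕ) (g : ℕ → ℕ) (f : ℕ → ι' → ZMod 2)
    (p : Fin (m+1)) (j : ι) :
    (∑ l ∈ s, atEvenO (m := m) (ι := ι) (g l) (f l)) (Sum.inl (p, j)) = 0 := by
  rw [Finset.sum_apply]
  apply Finset.sum_eq_zero; intro l _; rfl

lemma sum_atOddO_inr2 (s : Finset ℕ) (g : ℕ → ℕ) (f : ℕ → ι → ZMod 2)
    (p : Fin m) (j : ι') :
    (∑ l ∈ s, atOddO (m := m) (ι' := ι') (g l) (f l)) (Sum.inr (p, j)) = 0 := by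
  rw [Finset.sum_apply]
  apply Finset.sum_eq_zero; intro l _; rfl

end layers2

/-! ### From span membership to a product list -/

lemma prod_of_mem_spanX {n : Type} [Fintype n] [DecidableEq n]
    (G : Set (Matrix (n → ZMod 2) (n → ZMod 2) ℂ)) (XS : Set (n → ZMod 2))
    (hXS : ∀ u ∈ XS, Xop u ∈ G) (u : n → ZMod 2)
    (hu : u ∈ Submodule.span (ZMod 2) XS) :
    ∃ L : List (Matrix (n → ZMod 2) (n → ZMod 2) ℂ),
      (∀ M ∈ L, M ∈ G) ∧ L.prod = Xop u := by
  induction hu using Submodule.span_induction with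
  | mem w hw =>
    exact ⟨[Xop w], by intro M hM; rw [List.mem_singleton] at hM; rw [hM]; exact hXS w hw,
      by simp⟩
  | zero => exact ⟨[], by simp, by simp [Xop_zero]⟩
  | add w1 w2 _ _ ih1 ih2 =>
    obtain ⟨L1, h1, e1⟩ := ih1
    obtain ⟨L2, h2, e2⟩ := ih2
    refine ⟨L1 ++ L2, ?_, ?_⟩
    · intro M hM
      rcases List.mem_append.mp hM with h | h
      exacts [h1 M h, h2 M h]
    · rw [List.prod_append, e1, e2, Xop_mul_Xop]
  | smul c w hw ih =>
    obtain ⟨L, hL, e⟩ := ih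
    rcases zmod2_cases c with hc | hc <;> subst hc
    · refine ⟨[], by simp, ?_⟩
      rw [zero_smul]
      simp [Xop_zero]
    · rw [one_smul]
      exact ⟨L, hL, e⟩

lemma prod_of_mem_spanZ {n : Type} [Fintype n] [DecidableEq n]
    (G : Set (Matrix (n → ZMod 2) (n → ZMod 2) ℂ)) (ZS : Set (n → ZMod 2))
    (hZS : ∀ v ∈ ZS, Zop v ∈ G) (v : n → ZMod 2)
    (hv : v ∈ Submodule.span (ZMod 2) ZS) :
    ∃ L : List (Matrix (n → ZMod 2) (n → ZMod 2) ℂ),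
      (∀ M ∈ L, M ∈ G) ∧ L.prod = Zop v := by
  induction hv using Submodule.span_induction with
  | mem w hw =>
    exact ⟨[Zop w], by intro M hM; rw [List.mem_singleton] at hM; rw [hM]; exact hZS w hw,
      by simp⟩
  | zero => exact ⟨[], by simp, by simp [Zop_zero]⟩
  | add w1 w2 _ _ ih1 ih2 =>
    obtain ⟨L1, h1, e1⟩ := ih1
    obtain ⟨L2, h2, e2⟩ := ih2
    refine ⟨L1 ++ L2, ?_, ?_⟩
    · intro M hM
      rcases List.mem_append.mp hM with h | h
      exacts [h1 M h, h2 M h]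
    · rw [List.prod_append, e1, e2, Zop_mul_Zop]
  | smul c w hw ih =>
    obtain ⟨L, hL, e⟩ := ih
    rcases zmod2_cases c with hc | hc <;> subst hc
    · refine ⟨[], by simp, ?_⟩
      rw [zero_smul]
      simp [Zop_zero]
    · rw [one_smul]
      exact ⟨L, hL, e⟩


lemma bSide (m l₀ : ℕ) (hm : 1 ≤ m) (hl₀1 : 1 ≤ l₀) (hl₀m : l₀ ≤ m) (ι ι' A I : Type)
    [Fintype ι] [DecidableEq ι] [Fintype ι'] [DecidableEq ι'] [Fintype A] [Fintype I]
    (z : A → ι → ZMod 2) (x : I → ι → ZMod 2)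
    (z' : A → ι' → ZMod 2) (x' : I → ι' → ZMod 2)
    (hdual : ∀ (α : A) (i : I), dotp (z α) (x i) = dotp (z' α) (x' i))
    (b : OpenQ m ι ι' → ZMod 2)
    (Cb1 : ∀ i : I, dotp (rO b 1) (x i) = 0 ∧ dotp (rO b (m+1)) (x i) = 0)
    (Cb2 : ∀ (i : I) (l : ℕ), 1 ≤ l → l ≤ m →
      dotp (rO b l) (x i) + dotp (rE b l) (x' i) + dotp (rO b (l+1)) (x i) = 0)
    (Cb3 : ∀ K : ℕ, rE b K ∈ Submodule.span (ZMod 2) (Set.range z')) :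
    b ∈ Submodule.span (ZMod 2)
      {v : OpenQ m ι ι' → ZMod 2 | Zop v ∈ openBulkSet m l₀ ι ι' A I z x z' x'} := by
  classical
  have hDex : ∀ K : ℕ, ∃ D : A → ZMod 2, ∑ α, D α • z' α = rE b K := fun K =>
    (Submodule.mem_span_range_iff_exists_fun _).mp (Cb3 K)
  choose D hD using hDex
  set ν : ℕ → A → ZMod 2 := fun l =>
    if 2 ≤ l ∧ l ≤ l₀ then ∑ j ∈ Finset.Icc 1 (l-1), D j
    else if l₀ < l ∧ l ≤ m then ∑ j ∈ Finset.Icc l m, D j else 0 with hν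
  set μ : ℕ → ι' → ZMod 2 := fun l => ∑ α, ν l α • z' α with hμ
  set ζ : ℕ → ι → ZMod 2 := fun l => ∑ α, ν l α • z α with hζ
  set hh : ℕ → ι → ZMod 2 := fun L => rO b L + ζ L with hhh
  set vh : ι' → ZMod 2 := ∑ K ∈ Finset.Icc 1 m, rE b K with hvh
  have hνz : ∀ l, ¬(2 ≤ l ∧ l ≤ m) → ν l = 0 := by
    intro l hl
    simp only [hν]
    rw [if_neg (by omega), if_neg (by omega)]
  have hμz : ∀ l, ¬(2 ≤ l ∧ l ≤ m) → μ l = 0 := by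
    intro l hl
    simp only [hμ]
    rw [hνz l hl]
    simp
  have hζz : ∀ l, ¬(2 ≤ l ∧ l ≤ m) → ζ l = 0 := by
    intro l hl
    simp only [hζ]
    rw [hνz l hl]
    simp
  have hνrec : ∀ K, 1 ≤ K → K ≤ m → K ≠ l₀ → ν (K+1) = ν K + D K := by
    intro K h1 h2 hne
    rcases lt_or_gt_of_ne hne with hlt | hgt
    · have e1 : ν (K+1) = ∑ j ∈ Finset.Icc 1 K, D j := by
        simp only [hν]
        rw [if_pos ⟨by omega, by omega⟩]
        norm_num
      by_cases hK2 : 2 ≤ K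
      · have e2 : ν K = ∑ j ∈ Finset.Icc 1 (K-1), D j := by
          simp only [hν]
          rw [if_pos ⟨hK2, by omega⟩]
        have e3 : ∑ j ∈ Finset.Icc 1 K, D j = ∑ j ∈ Finset.Icc 1 (K-1), D j + D K := by
          conv_lhs => rw [show K = (K-1)+1 by omega]
          rw [Finset.sum_Icc_succ_top (by omega)]
          rw [show K - 1 + 1 = K by omega]
        rw [e1, e2, e3]
      · have hK1 : K = 1 := by omega
        subst hK1
        rw [e1, hνz 1 (by omega), zero_add]
        simp
    · have e1 : ν K = ∑ j ∈ Finset.Icc K m, D j := by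
        simp only [hν]
        rw [if_neg (by omega), if_pos ⟨hgt, h2⟩]
      have hsplit : Finset.Icc K m = insert K (Finset.Icc (K+1) m) := by
        ext r
        simp only [Finset.mem_Icc, Finset.mem_insert]
        omega
      by_cases hKm : K + 1 ≤ m
      · have e2 : ν (K+1) = ∑ j ∈ Finset.Icc (K+1) m, D j := by
          simp only [hν]
          rw [if_neg (by omega), if_pos ⟨by omega, hKm⟩]
        rw [e1, e2, hsplit, Finset.sum_insert (by simp)]
        linear_combination -addself (D K)
      · have e2 : ν (K+1) = 0 := hνz _ (by omega)
        have hsing : Finset.Icc K m = {K} := by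
          ext r
          simp only [Finset.mem_Icc, Finset.mem_singleton]
          omega
        rw [e1, e2, hsing, Finset.sum_singleton]
        linear_combination -addself (D K)
  have hμrec : ∀ K, 1 ≤ K → K ≤ m → K ≠ l₀ → μ (K+1) = μ K + rE b K := by
    intro K h1 h2 hne
    simp only [hμ]
    rw [hνrec K h1 h2 hne, ← hD K, ← Finset.sum_add_distrib]
    apply Finset.sum_congr rfl
    intro α _
    rw [Pi.add_apply, add_smul]
  have hνl0 : ν l₀ + ν (l₀+1) + D l₀ = ∑ j ∈ Finset.Icc 1 m, D j := by
    have e1 : ν l₀ = ∑ j ∈ Finset.Icc 1 (l₀-1), D j := by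
      by_cases h : 2 ≤ l₀
      · simp only [hν]
        rw [if_pos ⟨h, le_refl _⟩]
      · have hl1 : l₀ = 1 := by omega
        rw [hl1, hνz 1 (by omega)]
        simp
    have e2 : ν (l₀+1) = ∑ j ∈ Finset.Icc (l₀+1) m, D j := by
      by_cases h : l₀ + 1 ≤ m
      · simp only [hν]
        rw [if_neg (by omega), if_pos ⟨by omega, h⟩]
      · rw [hνz _ (by omega), Finset.Icc_eq_empty (by omega), Finset.sum_empty]
    have e3 : ∑ j ∈ Finset.Icc 1 m, D j
        = ∑ j ∈ Finset.Icc 1 (l₀-1), D j + ∑ j ∈ Finset.Icc l₀ m, D j := by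
      rw [← Finset.sum_union (by
        rw [Finset.disjoint_left]
        intro r hr1 hr2
        simp only [Finset.mem_Icc] at hr1 hr2
        omega)]
      congr 1
      ext r
      simp only [Finset.mem_Icc, Finset.mem_union]
      omega
    have e4 : ∑ j ∈ Finset.Icc l₀ m, D j = D l₀ + ∑ j ∈ Finset.Icc (l₀+1) m, D j := by
      have hsplit : Finset.Icc l₀ m = insert l₀ (Finset.Icc (l₀+1) m) := by
        ext r
        simp only [Finset.mem_Icc, Finset.mem_insert]
        omega
      rw [hsplit, Finset.sum_insert (by simp)]
    rw [e1, e2, e3, e4]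
    ring
  have hvl0 : μ l₀ + μ (l₀+1) + rE b l₀ = vh := by
    simp only [hμ, hvh]
    rw [← hD l₀]
    rw [Finset.sum_congr rfl (fun K (_ : K ∈ Finset.Icc 1 m) => (hD K).symm)]
    rw [Finset.sum_comm, ← Finset.sum_add_distrib, ← Finset.sum_add_distrib]
    apply Finset.sum_congr rfl
    intro α _
    rw [← add_smul, ← add_smul, ← Finset.sum_smul]
    congr 1
    have hc := congrFun hνl0 α
    simpa using hc
  have dtr : ∀ (c : A → ZMod 2) (i : I),
      dotp (∑ α, c α • z α) (x i) = dotp (∑ α, c α • z' α) (x' i) := by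
    intro c i
    rw [dotp_sum_left, dotp_sum_left]
    apply Finset.sum_congr rfl
    intro α _
    rw [dotp_smul_left, dotp_smul_left, hdual α i]
  have hζx : ∀ l i, dotp (ζ l) (x i) = dotp (μ l) (x' i) := by
    intro l i
    simp only [hζ, hμ]
    exact dtr (ν l) i
  have hup : ∀ L, 1 ≤ L → L ≤ l₀ → ∀ i, dotp (hh L) (x i) = 0 := by
    intro L h1
    induction L, h1 using Nat.le_induction with
    | base =>
      intro _ i
      simp only [hhh]
      rw [dotp_add_left, (Cb1 i).1, hζx, hμz 1 (by omega), dotp_zero_left, add_zero]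
    | succ L hL ih =>
      intro hle i
      have hLm : L ≤ m := by omega
      have hLl₀ : L ≠ l₀ := by omega
      have hrec := congrArg (fun w => dotp w (x' i)) (hμrec L (by omega) hLm hLl₀)
      simp only [dotp_add_left] at hrec
      have hc := Cb2 i L (by omega) hLm
      have hihi := ih (by omega) i
      simp only [hhh] at hihi ⊢
      rw [dotp_add_left] at hihi ⊢
      rw [hζx] at hihi ⊢
      rw [hrec]
      linear_combination hc + hihi - addself' (dotp (rO b L) (x i))
  have hdown : ∀ t, ∀ L, L = m + 1 - t → l₀ + 1 ≤ L → ∀ i, dotp (hh L) (x i) = 0 := by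
    intro t
    induction t with
    | zero =>
      intro L hL _ i
      have hL1 : L = m + 1 := by omega
      subst hL1
      simp only [hhh]
      rw [dotp_add_left, (Cb1 i).2, hζx, hμz (m+1) (by omega), dotp_zero_left, add_zero]
    | succ t ih =>
      intro L hL hLl₀ i
      by_cases hLtop : L = m + 1
      · subst hLtop
        simp only [hhh]
        rw [dotp_add_left, (Cb1 i).2, hζx, hμz (m+1) (by omega), dotp_zero_left, add_zero]
      · have hLm : L ≤ m := by omega
        have h1L : 1 ≤ L := by omega
        have ihL := ih (L+1) (by omega) (by omega) i
        have hrec := congrArg (fun w => dotp w (x' i)) (hμrec L h1L hLm (by omega))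
        simp only [dotp_add_left] at hrec
        have hc := Cb2 i L h1L hLm
        simp only [hhh] at ihL ⊢
        rw [dotp_add_left] at ihL ⊢
        rw [hζx] at ihL ⊢
        rw [hrec] at ihL
        linear_combination hc + ihL - addself' (dotp (rE b L) (x' i))
          - addself' (dotp (rO b (L+1)) (x i))
  have hhperp : ∀ L, 1 ≤ L → L ≤ m + 1 → ∀ i, dotp (hh L) (x i) = 0 := by
    intro L h1 h2 i
    by_cases h : L ≤ l₀
    · exact hup L h1 h i
    · exact hdown (m+1-L) L (by omega) (by omega) i
  have hvperp : ∀ i, dotp vh (x' i) = 0 := by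
    intro i
    simp only [hvh]
    rw [dotp_sum_left]
    have hterm : ∀ K ∈ Finset.Icc 1 m, dotp (rE b K) (x' i)
        = dotp (rO b K) (x i) + dotp (rO b (K+1)) (x i) := by
      intro K hK
      simp only [Finset.mem_Icc] at hK
      have hc := Cb2 i K hK.1 hK.2
      linear_combination hc - addself' (dotp (rO b K) (x i))
        - addself' (dotp (rO b (K+1)) (x i))
    have htel := telescope2 (fun K => dotp (rO b K) (x i)) m hm
    rw [Finset.sum_congr rfl hterm, htel, (Cb1 i).1, (Cb1 i).2, add_zero]
  have hvspan : vh ∈ Submodule.span (ZMod 2) (Set.range z') := by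
    simp only [hvh]
    exact Submodule.sum_mem _ (fun K _ => Cb3 K)
  have hgrand : b =
      (∑ t ∈ Finset.Icc 1 (m-1),
        (atEvenO t (μ (t+1)) + atOddO (t+1) (ζ (t+1)) + atEvenO (t+1) (μ (t+1))))
      + (∑ L ∈ Finset.Icc 1 (m+1), atOddO L (hh L))
      + atEvenO l₀ vh := by
    have hsplit3 : (∑ t ∈ Finset.Icc 1 (m-1),
        (atEvenO (m := m) (ι := ι) t (μ (t+1)) + atOddO (t+1) (ζ (t+1))
          + atEvenO (t+1) (μ (t+1))))
        = (∑ t ∈ Finset.Icc 1 (m-1), atEvenO t (μ (t+1)))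
          + (∑ t ∈ Finset.Icc 1 (m-1), atOddO (t+1) (ζ (t+1)))
          + (∑ t ∈ Finset.Icc 1 (m-1), atEvenO (t+1) (μ (t+1))) := by
      rw [← Finset.sum_add_distrib, ← Finset.sum_add_distrib]
    rw [hsplit3]
    funext q
    cases q with
    | inl pj =>
      obtain ⟨p, j⟩ := pj
      simp only [Pi.add_apply]
      simp only [sum_atEvenO_inl2 _ (fun l => l), sum_atEvenO_inl2 _ (fun l => l + 1),
        sum_atOddO_succ_inl, sum_atOddO_inl, atEvenO_inl, add_zero, zero_add]
      have hpin : (p : ℕ) + 1 ∈ Finset.Icc 1 (m+1) := by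
        simp only [Finset.mem_Icc]
        have := p.isLt
        omega
      rw [if_pos hpin]
      have hhval : hh ((p:ℕ)+1) j = b (Sum.inl (p, j)) + ζ ((p:ℕ)+1) j := by
        simp only [hhh, Pi.add_apply]
        rw [rO_val]
      rw [hhval]
      by_cases hc : (p : ℕ) ∈ Finset.Icc 1 (m-1)
      · rw [if_pos hc]
        linear_combination - addself' (ζ ((p:ℕ)+1) j)
      · rw [if_neg hc]
        simp only [Finset.mem_Icc] at hc
        have hz : ζ ((p:ℕ)+1) = 0 := by
          apply hζz
          have := p.isLt
          omega
        rw [hz]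
        simp
    | inr pj =>
      obtain ⟨p, j⟩ := pj
      simp only [Pi.add_apply]
      rw [show b (Sum.inr (p, j)) = rE b ((p:ℕ)+1) j from (rE_val b p j).symm]
      simp only [sum_atEvenO_inr, sum_atOddO_inr2 _ (fun l => l + 1),
        sum_atEvenO_succ_inr, sum_atOddO_inr2 _ (fun l => l), atEvenO_inr,
        add_zero, zero_add]
      have hKm : (p : ℕ) + 1 ≤ m := p.isLt
      have hA : (if (p:ℕ) + 1 ∈ Finset.Icc 1 (m-1) then μ ((p:ℕ)+1+1) j else 0)
          = μ ((p:ℕ)+1+1) j := by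
        by_cases hc : (p:ℕ) + 1 ∈ Finset.Icc 1 (m-1)
        · rw [if_pos hc]
        · rw [if_neg hc]
          simp only [Finset.mem_Icc] at hc
          have h0 : μ ((p:ℕ)+1+1) = 0 := hμz _ (by omega)
          rw [h0]
          simp
      have hB : (if (p:ℕ) ∈ Finset.Icc 1 (m-1) then μ ((p:ℕ)+1) j else 0)
          = μ ((p:ℕ)+1) j := by
        by_cases hc : (p:ℕ) ∈ Finset.Icc 1 (m-1)
        · rw [if_pos hc]
        · rw [if_neg hc]
          simp only [Finset.mem_Icc] at hc
          have h0 : μ ((p:ℕ)+1) = 0 := hμz _ (by omega)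
          rw [h0]
          simp
      rw [hA, hB]
      by_cases hKl : (p:ℕ) + 1 = l₀
      · rw [if_pos hKl]
        have hv := congrFun hvl0 j
        simp only [Pi.add_apply] at hv
        rw [← hKl] at hv
        linear_combination hv - addself' (μ ((p:ℕ)+1) j) - addself' (μ ((p:ℕ)+1+1) j)
      · rw [if_neg hKl]
        have hrecj := congrFun (hμrec ((p:ℕ)+1) (by omega) hKm hKl) j
        simp only [Pi.add_apply] at hrecj
        linear_combination - hrecj - addself' (μ ((p:ℕ)+1) j)
  rw [hgrand]
  refine Submodule.add_mem _ (Submodule.add_mem _ ?_ ?_) ?_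
  · apply Submodule.sum_mem
    intro t ht
    simp only [Finset.mem_Icc] at ht
    have hcomb : atEvenO (m := m) (ι := ι) t (μ (t+1)) + atOddO (t+1) (ζ (t+1))
          + atEvenO (t+1) (μ (t+1))
        = ∑ α, ν (t+1) α • (atEvenO (m := m) (ι := ι) t (z' α) + atOddO (t+1) (z α)
          + atEvenO (t+1) (z' α)) := by
      simp only [hμ, hζ, smul_add]
      rw [Finset.sum_add_distrib, Finset.sum_add_distrib]
      rw [atEvenO_sum, atOddO_sum, atEvenO_sum]
    rw [hcomb]
    apply Submodule.sum_mem
    intro α _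
    apply Submodule.smul_mem
    apply Submodule.subset_span
    show Zop _ ∈ openBulkSet m l₀ ι ι' A I z x z' x'
    exact Or.inr (Or.inr (Or.inl ⟨α, t+1, by omega, by omega, rfl⟩))
  · apply Submodule.sum_mem
    intro L hL
    simp only [Finset.mem_Icc] at hL
    apply Submodule.subset_span
    show Zop _ ∈ openBulkSet m l₀ ι ι' A I z x z' x'
    exact Or.inr (Or.inr (Or.inr (Or.inl ⟨L, hh L, hL.1, hL.2,
      fun i => hhperp L hL.1 hL.2 i, rfl⟩)))
  · apply Submodule.subset_span
    show Zop _ ∈ openBulkSet m l₀ ι ι' A I z x z' x'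
    exact Or.inr (Or.inr (Or.inr (Or.inr (Or.inr ⟨vh, hvspan, hvperp, rfl⟩))))


lemma aSide (m l₀ : ℕ) (hm : 1 ≤ m) (hl₀1 : 1 ≤ l₀) (hl₀m : l₀ ≤ m) (ι ι' A I : Type)
    [Fintype ι] [DecidableEq ι] [Fintype ι'] [DecidableEq ι'] [Fintype A] [Fintype I]
    (z : A → ι → ZMod 2) (x : I → ι → ZMod 2)
    (z' : A → ι' → ZMod 2) (x' : I → ι' → ZMod 2)
    (hdual : ∀ (α : A) (i : I), dotp (z α) (x i) = dotp (z' α) (x' i))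
    (a : OpenQ m ι ι' → ZMod 2)
    (Ca1 : ∀ L : ℕ, rO a L ∈ Submodule.span (ZMod 2) (Set.range x))
    (Ca2 : ∀ (α : A) (l : ℕ), 2 ≤ l → l ≤ m →
      dotp (rE a (l-1)) (z' α) + dotp (rO a l) (z α) + dotp (rE a l) (z' α) = 0)
    (Ca3 : ∀ v', v' ∈ Submodule.span (ZMod 2) (Set.range z') →
      (∀ i, dotp v' (x' i) = 0) → dotp (rE a l₀) v' = 0) :
    a ∈ Submodule.span (ZMod 2)
      {u : OpenQ m ι ι' → ZMod 2 | Xop u ∈ openBulkSet m l₀ ι ι' A I z x z' x'} := by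
  classical
  have hCex : ∀ L : ℕ, ∃ C : I → ZMod 2, ∑ i, C i • x i = rO a L := fun L =>
    (Submodule.mem_span_range_iff_exists_fun _).mp (Ca1 L)
  choose C hC using hCex
  set ρ : ℕ → I → ZMod 2 := fun l =>
    if 2 ≤ l ∧ l ≤ m then ∑ j ∈ Finset.Icc 2 l, C j else 0 with hρ
  set ξ : ℕ → ι → ZMod 2 := fun l => ∑ i, ρ l i • x i with hξ
  set ξ' : ℕ → ι' → ZMod 2 := fun l => ∑ i, ρ l i • x' i with hξ'
  set ta : ℕ → ι' → ZMod 2 := fun K => rE a K + ξ' K with hta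
  set wbd : ι → ZMod 2 := ∑ i, (C (m+1) i + ρ m i) • x i with hwbdDef
  have hρz : ∀ l, ¬(2 ≤ l ∧ l ≤ m) → ρ l = 0 := by
    intro l hl
    simp only [hρ]
    rw [if_neg (by omega)]
  have hξz : ∀ l, ¬(2 ≤ l ∧ l ≤ m) → ξ l = 0 := by
    intro l hl
    simp only [hξ]
    rw [hρz l hl]
    simp
  have hξ'z : ∀ l, ¬(2 ≤ l ∧ l ≤ m) → ξ' l = 0 := by
    intro l hl
    simp only [hξ']
    rw [hρz l hl]
    simp
  have hρrec : ∀ l, 1 ≤ l → l + 1 ≤ m → ρ (l+1) = ρ l + C (l+1) := by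
    intro l h1 h2
    by_cases hl1 : l = 1
    · subst hl1
      have e1 : ρ 2 = ∑ j ∈ Finset.Icc 2 2, C j := by
        simp only [hρ]
        rw [if_pos ⟨le_refl _, by omega⟩]
      rw [e1, hρz 1 (by omega), zero_add]
      simp
    · have e1 : ρ (l+1) = ∑ j ∈ Finset.Icc 2 (l+1), C j := by
        simp only [hρ]
        rw [if_pos ⟨by omega, h2⟩]
      have e2 : ρ l = ∑ j ∈ Finset.Icc 2 l, C j := by
        simp only [hρ]
        rw [if_pos ⟨by omega, by omega⟩]
      rw [e1, e2, Finset.sum_Icc_succ_top (by omega)]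
  have hξvec : ∀ l, 1 ≤ l → l + 1 ≤ m → ξ (l+1) = ξ l + rO a (l+1) := by
    intro l h1 h2
    simp only [hξ]
    rw [hρrec l h1 h2, ← hC (l+1), ← Finset.sum_add_distrib]
    apply Finset.sum_congr rfl
    intro i _
    rw [Pi.add_apply, add_smul]
  have hξ'vec : ∀ l, 1 ≤ l → l + 1 ≤ m → ξ' (l+1) = ξ' l + ∑ i, C (l+1) i • x' i := by
    intro l h1 h2
    simp only [hξ']
    rw [hρrec l h1 h2, ← Finset.sum_add_distrib]
    apply Finset.sum_congr rfl
    intro i _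
    rw [Pi.add_apply, add_smul]
  have hwbd : wbd = rO a (m+1) + ξ m := by
    simp only [hwbdDef, hξ]
    rw [← hC (m+1), ← Finset.sum_add_distrib]
    apply Finset.sum_congr rfl
    intro i _
    rw [add_smul]
  have dtr' : ∀ (c : I → ZMod 2) (α : A),
      dotp (∑ i, c i • x i) (z α) = dotp (∑ i, c i • x' i) (z' α) := by
    intro c α
    rw [dotp_sum_left, dotp_sum_left]
    apply Finset.sum_congr rfl
    intro i _
    rw [dotp_smul_left, dotp_smul_left]
    congr 1
    rw [dotp_comm, hdual α i, dotp_comm]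
  have hξzα : ∀ l α, dotp (ξ l) (z α) = dotp (ξ' l) (z' α) := by
    intro l α
    simp only [hξ, hξ']
    exact dtr' (ρ l) α
  -- constancy of dotp (ta K) (z' α) on 1 ≤ K ≤ m
  have hconst : ∀ (α : A) (K : ℕ), 1 ≤ K → K ≤ m →
      dotp (ta K) (z' α) = dotp (ta 1) (z' α) := by
    intro α K h1
    induction K, h1 using Nat.le_induction with
    | base => intro _; rfl
    | succ K hK ih =>
      intro hle
      have hKm : K ≤ m := by omega
      have ihK := ih hKm
      have hx2 := congrArg (fun w => dotp w (z' α)) (hξ'vec K hK (by omega))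
      simp only [dotp_add_left] at hx2
      have hca := Ca2 α (K+1) (by omega) (by omega)
      rw [show K + 1 - 1 = K from rfl] at hca
      have hoz : dotp (rO a (K+1)) (z α) = dotp (∑ i, C (K+1) i • x' i) (z' α) := by
        rw [← hC (K+1)]
        exact dtr' (C (K+1)) α
      simp only [hta, dotp_add_left] at ihK ⊢
      rw [hx2]
      linear_combination hca + ihK - hoz - addself' (dotp (rE a K) (z' α))
  -- the decomposition of ta l₀
  have hta0 : ∀ v', v' ∈ Submodule.span (ZMod 2) (Set.range z') →
      (∀ i, dotp v' (x' i) = 0) → dotp (ta l₀) v' = 0 := by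
    intro v' hv1 hv2
    simp only [hta]
    rw [dotp_add_left, Ca3 v' hv1 hv2, zero_add]
    simp only [hξ']
    rw [dotp_sum_left]
    apply Finset.sum_eq_zero
    intro i _
    rw [dotp_smul_left, dotp_comm, hv2 i, mul_zero]
  obtain ⟨u₀, w, htaeq, hu₀, hw⟩ := perp_inter_decomp z' x' (ta l₀) hta0
  obtain ⟨cw, hcw⟩ := (Submodule.mem_span_range_iff_exists_fun _).mp hw
  have huperp : ∀ K, 1 ≤ K → K ≤ m → ∀ α, dotp (ta K + w) (z' α) = 0 := by
    intro K h1 h2 α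
    have hKL : dotp (ta K) (z' α) = dotp (ta l₀) (z' α) :=
      (hconst α K h1 h2).trans (hconst α l₀ hl₀1 hl₀m).symm
    have htaq := congrArg (fun u => dotp u (z' α)) htaeq
    simp only [dotp_add_left] at htaq
    rw [dotp_add_left]
    linear_combination hKL + htaq + hu₀ α + addself' (dotp w (z' α))
  -- the grand decomposition
  have hgrand : a = atOddO 1 (rO a 1)
      + atOddO (m+1) wbd
      + (∑ l ∈ Finset.Icc 1 m, (atOddO l (ξ l) + atEvenO l (ξ' l) + atOddO (l+1) (ξ l)))
      + (∑ K ∈ Finset.Icc 1 m, atEvenO K (ta K + w))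
      + (∑ K ∈ Finset.Icc 1 m, atEvenO K w) := by
    have hsplit3 : (∑ l ∈ Finset.Icc 1 m,
        (atOddO (m := m) (ι' := ι') l (ξ l) + atEvenO l (ξ' l) + atOddO (l+1) (ξ l)))
        = (∑ l ∈ Finset.Icc 1 m, atOddO l (ξ l))
          + (∑ l ∈ Finset.Icc 1 m, atEvenO l (ξ' l))
          + (∑ l ∈ Finset.Icc 1 m, atOddO (l+1) (ξ l)) := by
      rw [← Finset.sum_add_distrib, ← Finset.sum_add_distrib]
    rw [hsplit3]
    funext q
    cases q with
    | inl pj =>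
      obtain ⟨p, j⟩ := pj
      simp only [Pi.add_apply]
      rw [show a (Sum.inl (p, j)) = rO a ((p:ℕ)+1) j from (rO_val a p j).symm]
      simp only [sum_atOddO_inl, sum_atOddO_succ_inl, sum_atEvenO_inl2 _ (fun l => l),
        atOddO_inl, atEvenO_inl, add_zero, zero_add]
      have hple := p.isLt
      by_cases hp0 : (p : ℕ) = 0
      · rw [if_pos (by omega), if_neg (by omega),
          if_pos (by simp [Finset.mem_Icc]; omega),
          if_neg (by simp [Finset.mem_Icc]; omega)]
        have hpe : (p:ℕ) + 1 = 1 := by omega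
        rw [hpe]
        have h0 : ξ 1 = 0 := hξz 1 (by omega)
        rw [h0]
        simp
      · by_cases hpm : (p : ℕ) = m
        · rw [if_neg (by omega), if_pos (by omega),
            if_neg (by simp [Finset.mem_Icc]; omega),
            if_pos (by simp [Finset.mem_Icc]; omega)]
          rw [hpm]
          have hwj := congrFun hwbd j
          simp only [Pi.add_apply] at hwj
          linear_combination -hwj - addself' (ξ m j)
        · rw [if_neg (by omega), if_neg (by omega),
            if_pos (by simp [Finset.mem_Icc]; omega),
            if_pos (by simp [Finset.mem_Icc]; omega)]
          have hxv := congrFun (hξvec (p:ℕ) (by omega) (by omega)) j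
          simp only [Pi.add_apply] at hxv
          linear_combination -hxv - addself' (ξ ((p:ℕ)) j)
    | inr pj =>
      obtain ⟨p, j⟩ := pj
      simp only [Pi.add_apply]
      rw [show a (Sum.inr (p, j)) = rE a ((p:ℕ)+1) j from (rE_val a p j).symm]
      simp only [sum_atOddO_inr2 _ (fun l => l), sum_atOddO_inr2 _ (fun l => l + 1),
        sum_atEvenO_inr, atOddO_inr, atEvenO_inr, add_zero, zero_add]
      have hKin : (p:ℕ) + 1 ∈ Finset.Icc 1 m := by
        simp only [Finset.mem_Icc]
        have := p.isLt
        omega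
      rw [if_pos hKin, if_pos hKin, if_pos hKin]
      have htaj : ta ((p:ℕ)+1) j = rE a ((p:ℕ)+1) j + ξ' ((p:ℕ)+1) j := by
        simp only [hta, Pi.add_apply]
      have : (ta ((p:ℕ)+1) + w) j = ta ((p:ℕ)+1) j + w j := rfl
      rw [this, htaj]
      linear_combination - addself' (ξ' ((p:ℕ)+1) j) - addself' (w j)
  rw [hgrand]
  refine Submodule.add_mem _ (Submodule.add_mem _ (Submodule.add_mem _
    (Submodule.add_mem _ ?_ ?_) ?_) ?_) ?_
  · -- boundary layer 1
    rw [← hC 1, atOddO_sum]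
    apply Submodule.sum_mem
    intro i _
    apply Submodule.smul_mem
    apply Submodule.subset_span
    show Xop _ ∈ openBulkSet m l₀ ι ι' A I z x z' x'
    exact Or.inl ⟨i, Or.inl rfl⟩
  · -- boundary layer m+1
    rw [hwbdDef, atOddO_sum]
    apply Submodule.sum_mem
    intro i _
    apply Submodule.smul_mem
    apply Submodule.subset_span
    show Xop _ ∈ openBulkSet m l₀ ι ι' A I z x z' x'
    exact Or.inl ⟨i, Or.inr rfl⟩
  · -- suspensions
    apply Submodule.sum_mem
    intro l hl
    simp only [Finset.mem_Icc] at hl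
    have hcomb : atOddO (m := m) (ι' := ι') l (ξ l) + atEvenO l (ξ' l) + atOddO (l+1) (ξ l)
        = ∑ i, ρ l i • (atOddO (m := m) (ι' := ι') l (x i) + atEvenO l (x' i)
          + atOddO (l+1) (x i)) := by
      simp only [hξ, hξ', smul_add]
      rw [Finset.sum_add_distrib, Finset.sum_add_distrib]
      rw [atOddO_sum, atEvenO_sum, atOddO_sum]
    rw [hcomb]
    apply Submodule.sum_mem
    intro i _
    apply Submodule.smul_mem
    apply Submodule.subset_span
    show Xop _ ∈ openBulkSet m l₀ ι ι' A I z x z' x'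
    exact Or.inr (Or.inl ⟨i, l, hl.1, hl.2, rfl⟩)
  · -- even-layer symmetries
    apply Submodule.sum_mem
    intro K hK
    simp only [Finset.mem_Icc] at hK
    apply Submodule.subset_span
    show Xop _ ∈ openBulkSet m l₀ ι ι' A I z x z' x'
    exact Or.inr (Or.inr (Or.inr (Or.inr (Or.inl ⟨K, ta K + w, hK.1, hK.2,
      fun α => huperp K hK.1 hK.2 α, rfl⟩))))
  · -- the ladder: ∑_K atEvenO K w
    have hlad : ∀ i : I, (∑ K ∈ Finset.Icc 1 m, atEvenO (m := m) (ι := ι) K (x' i))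
        = atOddO 1 (x i) + atOddO (m+1) (x i)
          + ∑ l ∈ Finset.Icc 1 m, (atOddO l (x i) + atEvenO l (x' i)
            + atOddO (l+1) (x i)) := by
      intro i
      have hsp : (∑ l ∈ Finset.Icc 1 m,
          (atOddO (m := m) (ι' := ι') l (x i) + atEvenO l (x' i) + atOddO (l+1) (x i)))
          = (∑ l ∈ Finset.Icc 1 m, atOddO l (x i))
            + (∑ l ∈ Finset.Icc 1 m, atEvenO l (x' i))
            + (∑ l ∈ Finset.Icc 1 m, atOddO (l+1) (x i)) := by
        rw [← Finset.sum_add_distrib, ← Finset.sum_add_distrib]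
      rw [hsp]
      funext q
      cases q with
      | inl pj =>
        obtain ⟨p, j⟩ := pj
        simp only [Pi.add_apply]
        simp only [sum_atOddO_inl, sum_atOddO_succ_inl, sum_atEvenO_inl2 _ (fun l => l),
          atOddO_inl, atEvenO_inl, add_zero, zero_add]
        have hple := p.isLt
        by_cases hp0 : (p : ℕ) = 0
        · rw [if_pos (by omega), if_neg (by omega),
            if_pos (by simp [Finset.mem_Icc]; omega),
            if_neg (by simp [Finset.mem_Icc]; omega)]
          linear_combination - addself' (x i j)
        · by_cases hpm : (p : ℕ) = m
          · rw [if_neg (by omega), if_pos (by omega),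
              if_neg (by simp [Finset.mem_Icc]; omega),
              if_pos (by simp [Finset.mem_Icc]; omega)]
            linear_combination - addself' (x i j)
          · rw [if_neg (by omega), if_neg (by omega),
              if_pos (by simp [Finset.mem_Icc]; omega),
              if_pos (by simp [Finset.mem_Icc]; omega)]
            linear_combination - addself' (x i j)
      | inr pj =>
        obtain ⟨p, j⟩ := pj
        simp only [Pi.add_apply]
        simp only [sum_atOddO_inr2 _ (fun l => l), sum_atOddO_inr2 _ (fun l => l + 1),
          sum_atEvenO_inr, atOddO_inr, atEvenO_inr, add_zero, zero_add]
    have hswap : (∑ K ∈ Finset.Icc 1 m, atEvenO (m := m) (ι := ι) K w)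
        = ∑ i, cw i • (∑ K ∈ Finset.Icc 1 m, atEvenO (m := m) (ι := ι) K (x' i)) := by
      rw [Finset.sum_congr rfl (fun K (_ : K ∈ Finset.Icc 1 m) => by
        rw [← hcw, atEvenO_sum])]
      rw [Finset.sum_comm]
      apply Finset.sum_congr rfl
      intro i _
      rw [Finset.smul_sum]
    rw [hswap]
    apply Submodule.sum_mem
    intro i _
    apply Submodule.smul_mem
    rw [hlad i]
    refine Submodule.add_mem _ (Submodule.add_mem _ ?_ ?_) ?_
    · apply Submodule.subset_span
      show Xop _ ∈ openBulkSet m l₀ ι ι' A I z x z' x'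
      exact Or.inl ⟨i, Or.inl rfl⟩
    · apply Submodule.subset_span
      show Xop _ ∈ openBulkSet m l₀ ι ι' A I z x z' x'
      exact Or.inl ⟨i, Or.inr rfl⟩
    · apply Submodule.sum_mem
      intro l hl
      simp only [Finset.mem_Icc] at hl
      apply Submodule.subset_span
      show Xop _ ∈ openBulkSet m l₀ ι ι' A I z x z' x'
      exact Or.inr (Or.inl ⟨i, l, hl.1, hl.2, rfl⟩)

end St14

/-- any Pauli operator `X_a Z_b` on the open bulk that commutes with every
operator in the open bulk generating set equals, up to a sign `ε = ±1`, a finite product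
of operators from that set. -/
theorem statement14 (m l₀ : ℕ) (hm : 1 ≤ m) (hl₀ : 1 ≤ l₀ ∧ l₀ ≤ m) (ι ι' A I : Type)
    [Fintype ι] [DecidableEq ι] [Fintype ι'] [DecidableEq ι'] [Fintype A] [Fintype I]
    (z : A → ι → ZMod 2) (x : I → ι → ZMod 2)
    (z' : A → ι' → ZMod 2) (x' : I → ι' → ZMod 2)
    (hdual : ∀ (α : A) (i : I), dotp (z α) (x i) = dotp (z' α) (x' i)) :
    ∀ a b : OpenQ m ι ι' → ZMod 2,
      (∀ M ∈ openBulkSet m l₀ ι ι' A I z x z' x',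
        (Xop a * Zop b) * M = M * (Xop a * Zop b)) →
      ∃ ε : ℂ, (ε = 1 ∨ ε = -1) ∧
        ∃ L : List (Matrix (OpenQ m ι ι' → ZMod 2) (OpenQ m ι ι' → ZMod 2) ℂ),
          (∀ M ∈ L, M ∈ openBulkSet m l₀ ι ι' A I z x z' x') ∧
          L.prod = ε • (Xop a * Zop b) := by
    classical
  intro a b hcomm
  -- specialize the commutation hypothesis to pure X / pure Z generators
  have hX : ∀ u, Xop u ∈ openBulkSet m l₀ ι ι' A I z x z' x' → dotp b u = 0 := by
    intro u hu
    have h := hcomm _ hu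
    have h2 : (Xop a * Zop b) * (Xop u * Zop 0) = (Xop u * Zop 0) * (Xop a * Zop b) := by
      rwa [St14.Zop_zero, mul_one]
    have h3 := (St14.XZ_comm_iff a b u 0).mp h2
    rwa [St14.dotp_zero_left] at h3
  have hZ : ∀ v, Zop v ∈ openBulkSet m l₀ ι ι' A I z x z' x' → dotp a v = 0 := by
    intro v hv
    have h := hcomm _ hv
    have h2 : (Xop a * Zop b) * (Xop 0 * Zop v) = (Xop 0 * Zop v) * (Xop a * Zop b) := by
      rwa [St14.Xop_zero, one_mul]
    have h3 := (St14.XZ_comm_iff a b 0 v).mp h2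
    rw [St14.dotp_zero_right] at h3
    rw [St14.dotp_comm]
    exact h3.symm
  -- constraints on a
  have Ca1 : ∀ L : ℕ, St14.rO a L ∈ Submodule.span (ZMod 2) (Set.range x) := by
    intro L
    by_cases hL : 1 ≤ L ∧ L ≤ m + 1
    · apply St14.mem_span_range_of_dotp
      intro v hv
      have h := hZ (atOddO L v)
        (Or.inr (Or.inr (Or.inr (Or.inl ⟨L, v, hL.1, hL.2, hv, rfl⟩))))
      rwa [St14.dotp_atOddO] at h
    · rw [St14.rO_zero a L hL]
      exact Submodule.zero_mem _
  have Ca2 : ∀ (α : A) (l : ℕ), 2 ≤ l → l ≤ m →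
      dotp (St14.rE a (l-1)) (z' α) + dotp (St14.rO a l) (z α)
        + dotp (St14.rE a l) (z' α) = 0 := by
    intro α l h2 hl
    have h := hZ (atEvenO (l-1) (z' α) + atOddO l (z α) + atEvenO l (z' α))
      (Or.inr (Or.inr (Or.inl ⟨α, l, h2, hl, rfl⟩)))
    rwa [St14.dotp_add_right, St14.dotp_add_right, St14.dotp_atEvenO, St14.dotp_atOddO,
      St14.dotp_atEvenO] at h
  have Ca3 : ∀ v', v' ∈ Submodule.span (ZMod 2) (Set.range z') →
      (∀ i, dotp v' (x' i) = 0) → dotp (St14.rE a l₀) v' = 0 := by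
    intro v' hsp hperp
    have h := hZ (atEvenO l₀ v')
      (Or.inr (Or.inr (Or.inr (Or.inr (Or.inr ⟨v', hsp, hperp, rfl⟩)))))
    rwa [St14.dotp_atEvenO] at h
  -- constraints on b
  have Cb1 : ∀ i : I, dotp (St14.rO b 1) (x i) = 0 ∧ dotp (St14.rO b (m+1)) (x i) = 0 := by
    intro i
    constructor
    · have h := hX (atOddO 1 (x i)) (Or.inl ⟨i, Or.inl rfl⟩)
      rwa [St14.dotp_atOddO] at h
    · have h := hX (atOddO (m+1) (x i)) (Or.inl ⟨i, Or.inr rfl⟩)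
      rwa [St14.dotp_atOddO] at h
  have Cb2 : ∀ (i : I) (l : ℕ), 1 ≤ l → l ≤ m →
      dotp (St14.rO b l) (x i) + dotp (St14.rE b l) (x' i)
        + dotp (St14.rO b (l+1)) (x i) = 0 := by
    intro i l h1 hl
    have h := hX (atOddO l (x i) + atEvenO l (x' i) + atOddO (l+1) (x i))
      (Or.inr (Or.inl ⟨i, l, h1, hl, rfl⟩))
    rwa [St14.dotp_add_right, St14.dotp_add_right, St14.dotp_atOddO, St14.dotp_atEvenO,
      St14.dotp_atOddO] at h
  have Cb3 : ∀ K : ℕ, St14.rE b K ∈ Submodule.span (ZMod 2) (Set.range z') := by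
    intro K
    by_cases hK : 1 ≤ K ∧ K ≤ m
    · apply St14.mem_span_range_of_dotp
      intro u' hu'
      have h := hX (atEvenO K u')
        (Or.inr (Or.inr (Or.inr (Or.inr (Or.inl ⟨K, u', hK.1, hK.2, hu', rfl⟩)))))
      rwa [St14.dotp_atEvenO] at h
    · rw [St14.rE_zero b K hK]
      exact Submodule.zero_mem _
  -- both halves lie in the span of the generating vectors
  have ha := St14.aSide m l₀ hm hl₀.1 hl₀.2 ι ι' A I z x z' x' hdual a Ca1 Ca2 Ca3
  have hb := St14.bSide m l₀ hm hl₀.1 hl₀.2 ι ι' A I z x z' x' hdual b Cb1 Cb2 Cb3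
  obtain ⟨L1, hL1, e1⟩ := St14.prod_of_mem_spanX (openBulkSet m l₀ ι ι' A I z x z' x')
    _ (fun u hu => hu) a ha
  obtain ⟨L2, hL2, e2⟩ := St14.prod_of_mem_spanZ (openBulkSet m l₀ ι ι' A I z x z' x')
    _ (fun v hv => hv) b hb
  refine ⟨1, Or.inl rfl, L1 ++ L2, ?_, ?_⟩
  · intro M hM
    rcases List.mem_append.mp hM with h | h
    exacts [hL1 M h, hL2 M h]
  · rw [List.prod_append, e1, e2, one_smul]
end
end

section
/- Let V be a nonzero finite-dimensional complex vector space and let H, U, W : V → V be linear maps such that U ∘ U = id, W is bijective, H ∘ U = U ∘ H, H ∘ W = W ∘ H, and U ∘ W = − W ∘ U. Then for every μ ∈ ℂ, the eigenspace ker(H − μ·id) has even dimension; in particular, if μ is an eigenvalue of H, its eigenspace has dimension at least 2. -/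
noncomputable section

/-- if `U² = id`, `W` is bijective, `H` commutes with `U` and `W`, and
`U W = - W U`, then every eigenspace of `H` has even dimension; in particular, every
eigenvalue of `H` has eigenspace of dimension at least `2`. -/
theorem statement15 (V : Type) [AddCommGroup V] [Module ℂ V]
    [FiniteDimensional ℂ V] [Nontrivial V]
    (H U W : V →ₗ[ℂ] V)
    (hU2 : U ∘ₗ U = LinearMap.id)
    (hWbij : Function.Bijective W)
    (hHU : H ∘ₗ U = U ∘ₗ H)
    (hHW : H ∘ₗ W = W ∘ₗ H)
    (hUW : U ∘ₗ W = -(W ∘ₗ U)) :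
    ∀ μ : ℂ,
      Even (Module.finrank ℂ ↥(LinearMap.ker (H - μ • LinearMap.id))) ∧
      ((∃ ψ : V, ψ ≠ 0 ∧ H ψ = μ • ψ) →
        2 ≤ Module.finrank ℂ ↥(LinearMap.ker (H - μ • LinearMap.id))) := by
  intro μ
  set E : Submodule ℂ V := LinearMap.ker (H - μ • LinearMap.id) with hE
  have hmemE : ∀ v : V, v ∈ E ↔ H v = μ • v := by
    intro v
    simp [hE, LinearMap.mem_ker, sub_eq_zero]
  -- pointwise versions of the hypotheses
  have hUU : ∀ v, U (U v) = v := fun v => DFunLike.congr_fun hU2 v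
  have hHUv : ∀ v, H (U v) = U (H v) := fun v => DFunLike.congr_fun hHU v
  have hHWv : ∀ v, H (W v) = W (H v) := fun v => DFunLike.congr_fun hHW v
  have hUWv : ∀ v, U (W v) = -(W (U v)) := fun v => DFunLike.congr_fun hUW v
  have hUE : ∀ v ∈ E, U v ∈ E := by
    intro v hv
    rw [hmemE] at hv ⊢
    rw [hHUv, hv, map_smul]
  have hWE : ∀ v ∈ E, W v ∈ E := by
    intro v hv
    rw [hmemE] at hv ⊢
    rw [hHWv, hv, map_smul]
  set Ep : Submodule ℂ V := E ⊓ LinearMap.ker (U - LinearMap.id) with hEp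
  set Em : Submodule ℂ V := E ⊓ LinearMap.ker (U + LinearMap.id) with hEm
  have hmemp : ∀ v, v ∈ Ep ↔ v ∈ E ∧ U v = v := by
    intro v
    simp [hEp, LinearMap.mem_ker, sub_eq_zero]
  have hmemm : ∀ v, v ∈ Em ↔ v ∈ E ∧ U v = -v := by
    intro v
    simp [hEm, LinearMap.mem_ker, add_eq_zero_iff_eq_neg]
  -- E = Ep ⊔ Em
  have hsup : Ep ⊔ Em = E := by
    apply le_antisymm
    · exact sup_le inf_le_left inf_le_left
    · intro v hv
      have h1 : (2⁻¹ : ℂ) • (v + U v) ∈ Ep := by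
        rw [hmemp]
        constructor
        · exact E.smul_mem _ (E.add_mem hv (hUE v hv))
        · rw [map_smul, map_add, hUU, add_comm]
      have h2 : (2⁻¹ : ℂ) • (v - U v) ∈ Em := by
        rw [hmemm]
        constructor
        · exact E.smul_mem _ (E.sub_mem hv (hUE v hv))
        · rw [map_smul, map_sub, hUU, ← smul_neg, neg_sub]
      have hv2 : v = (2⁻¹ : ℂ) • (v + U v) + (2⁻¹ : ℂ) • (v - U v) := by
        rw [smul_add, smul_sub]
        module
      rw [hv2]
      exact Submodule.add_mem_sup h1 h2
  have hinf : Ep ⊓ Em = ⊥ := by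
    rw [eq_bot_iff]
    intro v hv
    obtain ⟨hp, hm⟩ := Submodule.mem_inf.mp hv
    have h1 := ((hmemp v).mp hp).2
    have h2 := ((hmemm v).mp hm).2
    have h3 : (2 : ℂ) • v = 0 := by
      rw [two_smul]
      rw [h1] at h2
      linear_combination (norm := abel) h2
    rw [Submodule.mem_bot]
    have := smul_eq_zero.mp h3
    simpa using this
  -- W maps Ep into Em and Em into Ep
  have hWpm : ∀ v ∈ Ep, W v ∈ Em := by
    intro v hv
    obtain ⟨hvE, hvU⟩ := (hmemp v).mp hv
    rw [hmemm]
    exact ⟨hWE v hvE, by rw [hUWv, hvU]⟩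
  have hWmp : ∀ v ∈ Em, W v ∈ Ep := by
    intro v hv
    obtain ⟨hvE, hvU⟩ := (hmemm v).mp hv
    rw [hmemp]
    exact ⟨hWE v hvE, by rw [hUWv, hvU, map_neg, neg_neg]⟩
  have hinj : ∀ (p q : Submodule ℂ V) (h : ∀ v ∈ p, W v ∈ q),
      Function.Injective (W.restrict h) := by
    intro p q h x y hxy
    have h' : W (x : V) = W (y : V) := congrArg Subtype.val hxy
    exact Subtype.ext (hWbij.1 h')
  have le1 : Module.finrank ℂ Ep ≤ Module.finrank ℂ Em :=
    LinearMap.finrank_le_finrank_of_injective (f := W.restrict hWpm) (hinj _ _ hWpm)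
  have le2 : Module.finrank ℂ Em ≤ Module.finrank ℂ Ep :=
    LinearMap.finrank_le_finrank_of_injective (f := W.restrict hWmp) (hinj _ _ hWmp)
  have heq : Module.finrank ℂ Ep = Module.finrank ℂ Em := le_antisymm le1 le2
  have hdim := Submodule.finrank_sup_add_finrank_inf_eq Ep Em
  rw [hsup, hinf, finrank_bot, ← heq] at hdim
  have heven : Even (Module.finrank ℂ E) := ⟨Module.finrank ℂ Ep, by omega⟩
  refine ⟨heven, ?_⟩
  rintro ⟨ψ, hψ0, hψ⟩
  have hψE : ψ ∈ E := (hmemE ψ).mpr hψ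
  have hne : Module.finrank ℂ E ≠ 0 := by
    intro h0
    have : E = ⊥ := Submodule.finrank_eq_zero.mp h0
    rw [this, Submodule.mem_bot] at hψE
    exact hψ0 hψE
  obtain ⟨k, hk⟩ := heven
  omega
end
end

section
/- Let V be a finite-dimensional complex vector space, n a natural number, H : V → V a linear map, and U_1, …, U_n, W_1, …, W_n : V → V linear maps satisfying: U_k ∘ U_k = id for each k; the U_k pairwise commute; each U_k commutes with H; each W_k is bijective and commutes with H; U_k ∘ W_k = − W_k ∘ U_k for each k; and U_j ∘ W_k = W_k ∘ U_j whenever j ≠ k. Then for every μ ∈ ℂ, 2^n divides the dimension of ker(H − μ·id); in particular, every nonzero eigenspace of H has dimension at least 2^n. -/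
noncomputable section

private lemma aux16 : ∀ (n : ℕ) (V : Type) [AddCommGroup V] [Module ℂ V]
    [FiniteDimensional ℂ V] (U W : Fin n → (V →ₗ[ℂ] V)),
    (∀ k, U k ∘ₗ U k = LinearMap.id) →
    (∀ j k, U j ∘ₗ U k = U k ∘ₗ U j) →
    (∀ k, Function.Bijective (W k)) →
    (∀ k, U k ∘ₗ W k = -(W k ∘ₗ U k)) →
    (∀ j k, j ≠ k → U j ∘ₗ W k = W k ∘ₗ U j) →
    2 ^ n ∣ Module.finrank ℂ V := by
  intro n
  induction n with
  | zero => intro V _ _ _ U W _ _ _ _ _; simp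
  | succ n ih =>
    intro V _ _ _ U W hU2 hUcomm hWbij hUW hUWcomm
    have hU2' : ∀ k (x : V), U k (U k x) = x := fun k x =>
      congrArg (fun f => f x) (hU2 k)
    have hUcomm' : ∀ j k (x : V), U j (U k x) = U k (U j x) := fun j k x =>
      congrArg (fun f => f x) (hUcomm j k)
    have hUW' : ∀ k (x : V), U k (W k x) = -(W k (U k x)) := fun k x =>
      congrArg (fun f => f x) (hUW k)
    have hUWcomm' : ∀ j k, j ≠ k → ∀ (x : V), U j (W k x) = W k (U j x) :=
      fun j k h x => congrArg (fun f => f x) (hUWcomm j k h)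
    set P : Submodule ℂ V := LinearMap.ker (U 0 - LinearMap.id) with hP
    set N : Submodule ℂ V := LinearMap.ker (U 0 + LinearMap.id) with hN
    have hmemP : ∀ x : V, x ∈ P ↔ U 0 x = x := by
      intro x
      simp [hP, LinearMap.mem_ker, LinearMap.sub_apply, sub_eq_zero]
    have hmemN : ∀ x : V, x ∈ N ↔ U 0 x = -x := by
      intro x
      simp [hN, LinearMap.mem_ker, LinearMap.add_apply, add_eq_zero_iff_eq_neg]
    have hcompl : IsCompl P N := by
      constructor
      · rw [Submodule.disjoint_def]
        intro x hx hx'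
        rw [hmemP] at hx; rw [hmemN] at hx'
        have hxx : x = -x := hx.symm.trans hx'
        have h2 : (2 : ℂ) • x = 0 := by
          rw [two_smul]
          exact add_eq_zero_iff_eq_neg.mpr hxx
        rcases smul_eq_zero.mp h2 with h | h
        · exact absurd h two_ne_zero
        · exact h
      · rw [codisjoint_iff, eq_top_iff]
        intro x _
        have hx : x = ((1:ℂ)/2) • (x + U 0 x) + ((1:ℂ)/2) • (x - U 0 x) := by
          module
        rw [hx]
        apply Submodule.add_mem_sup
        · apply Submodule.smul_mem
          rw [hmemP, map_add, hU2']
          abel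
        · apply Submodule.smul_mem
          rw [hmemN, map_sub, hU2']
          abel
    have hWPN : ∀ x : V, x ∈ P → W 0 x ∈ N := by
      intro x hx
      rw [hmemP] at hx
      rw [hmemN, hUW', hx]
    set f : ↥P →ₗ[ℂ] ↥N :=
      LinearMap.codRestrict N ((W 0) ∘ₗ P.subtype) (fun x => hWPN x x.2) with hf
    have hfbij : Function.Bijective f := by
      constructor
      · intro a b hab
        have h1 : W 0 a.1 = W 0 b.1 := congrArg Subtype.val hab
        exact Subtype.ext ((hWbij 0).1 h1)
      · intro y
        obtain ⟨x, hx⟩ := (hWbij 0).2 y.1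
        have hxP : x ∈ P := by
          rw [hmemP]
          apply (hWbij 0).1
          have h2 : W 0 (U 0 x) = -(U 0 (W 0 x)) := by rw [hUW', neg_neg]
          rw [h2, hx, (hmemN y.1).mp y.2, neg_neg, ← hx]
        exact ⟨⟨x, hxP⟩, Subtype.ext hx⟩
    have hPN : Module.finrank ℂ P = Module.finrank ℂ N :=
      (LinearEquiv.ofBijective f hfbij).finrank_eq
    have hdim : Module.finrank ℂ V = 2 * Module.finrank ℂ P := by
      rw [← Submodule.finrank_add_eq_of_isCompl hcompl, ← hPN]; ring
    have hUP : ∀ k : Fin n, ∀ x ∈ P, U k.succ x ∈ P := by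
      intro k x hx
      rw [hmemP] at hx ⊢
      rw [hUcomm' 0 k.succ, hx]
    have hWP : ∀ k : Fin n, ∀ x ∈ P, W k.succ x ∈ P := by
      intro k x hx
      rw [hmemP] at hx ⊢
      rw [hUWcomm' 0 k.succ (Fin.succ_ne_zero k).symm, hx]
    set U' : Fin n → (↥P →ₗ[ℂ] ↥P) := fun k => (U k.succ).restrict (hUP k) with hU'
    set W' : Fin n → (↥P →ₗ[ℂ] ↥P) := fun k => (W k.succ).restrict (hWP k) with hW'
    have key : 2 ^ n ∣ Module.finrank ℂ P := by
      apply ih P U' W'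
      · intro k
        ext x
        simp only [hU', LinearMap.comp_apply, LinearMap.restrict_coe_apply,
          LinearMap.id_coe, id_eq]
        exact hU2' k.succ x.1
      · intro j k
        ext x
        simp only [hU', LinearMap.comp_apply, LinearMap.restrict_coe_apply]
        exact hUcomm' j.succ k.succ x.1
      · intro k
        have hinj : Function.Injective (W' k) := by
          intro a b hab
          have h1 : W k.succ a.1 = W k.succ b.1 := by
            have := congrArg Subtype.val hab
            simpa [hW', LinearMap.restrict_coe_apply] using this
          exact Subtype.ext ((hWbij k.succ).1 h1)
        exact ⟨hinj, (LinearMap.injective_iff_surjective).mp hinj⟩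
      · intro k
        ext x
        simp only [hU', hW', LinearMap.comp_apply, LinearMap.restrict_coe_apply,
          LinearMap.neg_apply, NegMemClass.coe_neg]
        exact hUW' k.succ x.1
      · intro j k hjk
        ext x
        simp only [hU', hW', LinearMap.comp_apply, LinearMap.restrict_coe_apply]
        exact hUWcomm' j.succ k.succ (fun h => hjk (Fin.succ_injective n h)) x.1
    obtain ⟨d, hd⟩ := key
    exact ⟨d, by rw [hdim, hd, pow_succ]; ring⟩

/-- given commuting involutions `U k` and bijections `W k` as in the
statement, `2^n` divides the dimension of every eigenspace of `H`; in particular every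
nonzero eigenspace of `H` has dimension at least `2^n`. -/
theorem statement16 (V : Type) [AddCommGroup V] [Module ℂ V] [FiniteDimensional ℂ V]
    (n : ℕ) (H : V →ₗ[ℂ] V) (U W : Fin n → (V →ₗ[ℂ] V))
    (hU2 : ∀ k, U k ∘ₗ U k = LinearMap.id)
    (hUcomm : ∀ j k, U j ∘ₗ U k = U k ∘ₗ U j)
    (hUH : ∀ k, H ∘ₗ U k = U k ∘ₗ H)
    (hWbij : ∀ k, Function.Bijective (W k))
    (hWH : ∀ k, H ∘ₗ W k = W k ∘ₗ H)
    (hUW : ∀ k, U k ∘ₗ W k = -(W k ∘ₗ U k))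
    (hUWcomm : ∀ j k, j ≠ k → U j ∘ₗ W k = W k ∘ₗ U j) :
    ∀ μ : ℂ,
      2 ^ n ∣ Module.finrank ℂ ↥(LinearMap.ker (H - μ • LinearMap.id)) ∧
      (LinearMap.ker (H - μ • LinearMap.id) ≠ ⊥ →
        2 ^ n ≤ Module.finrank ℂ ↥(LinearMap.ker (H - μ • LinearMap.id))) := by
  intro μ
  set E : Submodule ℂ V := LinearMap.ker (H - μ • LinearMap.id) with hE
  have hmemE : ∀ x : V, x ∈ E ↔ H x = μ • x := by
    intro x
    simp [hE, LinearMap.mem_ker, LinearMap.sub_apply, sub_eq_zero]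
  have hUH' : ∀ k (x : V), H (U k x) = U k (H x) := fun k x =>
    congrArg (fun f => f x) (hUH k)
  have hWH' : ∀ k (x : V), H (W k x) = W k (H x) := fun k x =>
    congrArg (fun f => f x) (hWH k)
  have hU2' : ∀ k (x : V), U k (U k x) = x := fun k x =>
    congrArg (fun f => f x) (hU2 k)
  have hUcomm' : ∀ j k (x : V), U j (U k x) = U k (U j x) := fun j k x =>
    congrArg (fun f => f x) (hUcomm j k)
  have hUW' : ∀ k (x : V), U k (W k x) = -(W k (U k x)) := fun k x =>
    congrArg (fun f => f x) (hUW k)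
  have hUWcomm' : ∀ j k, j ≠ k → ∀ (x : V), U j (W k x) = W k (U j x) :=
    fun j k h x => congrArg (fun f => f x) (hUWcomm j k h)
  have hUE : ∀ k, ∀ x ∈ E, U k x ∈ E := by
    intro k x hx
    rw [hmemE] at hx ⊢
    rw [hUH', hx, map_smul]
  have hWE : ∀ k, ∀ x ∈ E, W k x ∈ E := by
    intro k x hx
    rw [hmemE] at hx ⊢
    rw [hWH', hx, map_smul]
  set U' : Fin n → (↥E →ₗ[ℂ] ↥E) := fun k => (U k).restrict (hUE k) with hU'
  set W' : Fin n → (↥E →ₗ[ℂ] ↥E) := fun k => (W k).restrict (hWE k) with hW'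
  have key : 2 ^ n ∣ Module.finrank ℂ E := by
    apply aux16 n E U' W'
    · intro k
      ext x
      simp only [hU', LinearMap.comp_apply, LinearMap.restrict_coe_apply,
        LinearMap.id_coe, id_eq]
      exact hU2' k x.1
    · intro j k
      ext x
      simp only [hU', LinearMap.comp_apply, LinearMap.restrict_coe_apply]
      exact hUcomm' j k x.1
    · intro k
      have hinj : Function.Injective (W' k) := by
        intro a b hab
        have h1 : W k a.1 = W k b.1 := by
          have := congrArg Subtype.val hab
          simpa [hW', LinearMap.restrict_coe_apply] using this
        exact Subtype.ext ((hWbij k).1 h1)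
      exact ⟨hinj, (LinearMap.injective_iff_surjective).mp hinj⟩
    · intro k
      ext x
      simp only [hU', hW', LinearMap.comp_apply, LinearMap.restrict_coe_apply,
        LinearMap.neg_apply, NegMemClass.coe_neg]
      exact hUW' k x.1
    · intro j k hjk
      ext x
      simp only [hU', hW', LinearMap.comp_apply, LinearMap.restrict_coe_apply]
      exact hUWcomm' j k hjk x.1
  refine ⟨key, fun hne => ?_⟩
  have hnt : Nontrivial ↥E := by
    obtain ⟨x, hx, hx0⟩ := Submodule.exists_mem_ne_zero_of_ne_bot hne
    exact ⟨⟨x, hx⟩, 0, by simp [Subtype.ext_iff, hx0]⟩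
  have hpos : 0 < Module.finrank ℂ E := Module.finrank_pos_iff.mpr hnt
  exact Nat.le_of_dvd hpos key
end
end

section
/- Let Nx, Ny, T, and the cross vectors χ_{i,j} be as in the context. Then the ZMod 2-linear span of {χ_{i,j} : (i, j) ∈ T, j odd} inside the space of functions T → ZMod 2 has ZMod 2-dimension exactly Nx·Ny/2 − 2. -/
noncomputable section

/-- The indicator function (valued in `ZMod 2`) of a single site of the torus. -/
def siteInd {Nx Ny : ℕ} (p : ZMod Nx × ZMod Ny) : ZMod Nx × ZMod Ny → ZMod 2 :=
  fun q => if q = p then 1 else 0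

/-- The cross vector `χ_{i,j}`: the `ZMod 2` sum of the indicator functions of the five
sites `(i, j-1), (i-1, j), (i, j), (i+1, j), (i, j+1)`. -/
def cross {Nx Ny : ℕ} (p : ZMod Nx × ZMod Ny) : ZMod Nx × ZMod Ny → ZMod 2 :=
  siteInd (p.1, p.2 - 1) + siteInd (p.1 - 1, p.2) + siteInd p +
    siteInd (p.1 + 1, p.2) + siteInd (p.1, p.2 + 1)

namespace St19

variable (Nx Ny : ℕ) [NeZero Nx] [NeZero Ny]

def fam : ZMod Nx × ZMod Ny → (ZMod Nx × ZMod Ny → ZMod 2) :=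
  fun p => if Odd p.2.val then cross p else 0

def phi : ((ZMod Nx × ZMod Ny) → ZMod 2) →ₗ[ZMod 2] ((ZMod Nx × ZMod Ny) → ZMod 2) :=
  Fintype.linearCombination (ZMod 2) (fam Nx Ny)

def oddPart (c : ZMod Nx × ZMod Ny → ZMod 2) : ZMod Nx × ZMod Ny → ZMod 2 :=
  fun p => if Odd p.2.val then c p else 0

variable {Nx Ny}

omit [NeZero Nx] in
lemma odd_natCast (h2 : 2 ∣ Ny) (n : ℕ) : Odd ((n : ZMod Ny)).val ↔ Odd n := by
  rw [ZMod.val_natCast, Nat.odd_iff, Nat.odd_iff, Nat.mod_mod_of_dvd _ h2]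

omit [NeZero Nx] in
lemma odd_succ (h2 : 2 ∣ Ny) (x : ZMod Ny) : Odd ((x + 1).val) ↔ ¬ Odd x.val := by
  have hx : ((x.val + 1 : ℕ) : ZMod Ny) = x + 1 := by
    push_cast
    rw [ZMod.natCast_rightInverse x]
  rw [← hx, odd_natCast h2, Nat.odd_add_one]

lemma sum_ind (g : ZMod Nx × ZMod Ny → ZMod 2) (f : ZMod Nx × ZMod Ny → ZMod Nx × ZMod Ny)
    (a q : ZMod Nx × ZMod Ny) (hf : ∀ p, (q = f p ↔ p = a)) :
    ∑ p, g p * (if q = f p then (1 : ZMod 2) else 0) = g a := by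
  have h1 : ∀ p ∈ Finset.univ, g p * (if q = f p then (1 : ZMod 2) else 0)
      = if p = a then g p else 0 := by
    intro p _
    by_cases h : p = a
    · rw [if_pos ((hf p).mpr h), mul_one, if_pos h]
    · rw [if_neg (fun hq => h ((hf p).mp hq)), mul_zero, if_neg h]
  rw [Finset.sum_congr rfl h1, Finset.sum_ite_eq' Finset.univ a g,
    if_pos (Finset.mem_univ a)]

lemma phi_eval (c : ZMod Nx × ZMod Ny → ZMod 2) (q : ZMod Nx × ZMod Ny) :
    phi Nx Ny c q = oddPart Nx Ny c (q.1, q.2 - 1) + oddPart Nx Ny c (q.1 - 1, q.2)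
      + oddPart Nx Ny c q + oddPart Nx Ny c (q.1 + 1, q.2) + oddPart Nx Ny c (q.1, q.2 + 1) := by
  have h0 : phi Nx Ny c q = ∑ p, oddPart Nx Ny c p * cross p q := by
    rw [phi, Fintype.linearCombination_apply]
    rw [Finset.sum_apply]
    refine Finset.sum_congr rfl fun p _ => ?_
    by_cases h : Odd p.2.val <;> simp [fam, oddPart, h]
  rw [h0]
  have hcross : ∀ p : ZMod Nx × ZMod Ny, cross p q =
      (if q = (p.1, p.2 - 1) then (1:ZMod 2) else 0) + (if q = (p.1 - 1, p.2) then 1 else 0)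
      + (if q = p then 1 else 0) + (if q = (p.1 + 1, p.2) then 1 else 0)
      + (if q = (p.1, p.2 + 1) then 1 else 0) := fun p => rfl
  simp only [hcross, mul_add, Finset.sum_add_distrib]
  rw [sum_ind _ _ (q.1, q.2 + 1) q (fun p => by
        constructor
        · rintro rfl; simp [Prod.ext_iff]
        · rintro rfl; simp [Prod.ext_iff]),
      sum_ind _ _ (q.1 + 1, q.2) q (fun p => by
        constructor
        · rintro rfl; simp [Prod.ext_iff]
        · rintro rfl; simp [Prod.ext_iff]),
      sum_ind _ _ q q (fun p => by exact eq_comm),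
      sum_ind _ _ (q.1 - 1, q.2) q (fun p => by
        constructor
        · rintro rfl; simp [Prod.ext_iff]
        · rintro rfl; simp [Prod.ext_iff]),
      sum_ind _ _ (q.1, q.2 - 1) q (fun p => by
        constructor
        · rintro rfl; simp [Prod.ext_iff]
        · rintro rfl; simp [Prod.ext_iff])]
  abel

variable (Nx Ny)

def sol : Submodule (ZMod 2) (ZMod Nx → ZMod 2) where
  carrier := {d | ∀ i, d (i - 1) + d i + d (i + 1) = 0}
  add_mem' := by
    intro a b ha hb i
    have h1 := ha i; have h2 := hb i
    simp only [Pi.add_apply]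
    linear_combination h1 + h2
  zero_mem' := by intro i; simp
  smul_mem' := by
    intro r d hd i
    simp only [Pi.smul_apply, smul_eq_mul]
    linear_combination r * hd i

variable {Nx Ny}

lemma finrank_sol (h3 : 3 ∣ Nx) :
    Module.finrank (ZMod 2) (sol Nx) = 2 := by
  let f : sol Nx →ₗ[ZMod 2] (ZMod 2 × ZMod 2) :=
    { toFun := fun d => (d.1 0, d.1 1)
      map_add' := fun a b => rfl
      map_smul' := fun r a => rfl }
  have hinj : Function.Injective f := by
    rw [← LinearMap.ker_eq_bot, LinearMap.ker_eq_bot']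
    intro d hd
    have h0 : d.1 0 = 0 := congrArg Prod.fst hd
    have h1 : d.1 1 = 0 := congrArg Prod.snd hd
    have key : ∀ n : ℕ, d.1 ((n : ℕ) : ZMod Nx) = 0 := by
      intro n
      induction n using Nat.strong_induction_on with
      | _ n ih =>
        match n with
        | 0 => simpa using h0
        | 1 => simpa using h1
        | (m + 2) =>
          have hr := d.2 ((m + 1 : ℕ) : ZMod Nx)
          have e1 : ((m + 1 : ℕ) : ZMod Nx) - 1 = ((m : ℕ) : ZMod Nx) := by push_cast; ring
          have e2 : ((m + 1 : ℕ) : ZMod Nx) + 1 = ((m + 2 : ℕ) : ZMod Nx) := by push_cast; ring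
          rw [e1, e2] at hr
          have i1 := ih m (by omega)
          have i2 := ih (m + 1) (by omega)
          linear_combination hr - i1 - i2
    ext i
    have := key i.val
    rwa [ZMod.natCast_rightInverse i] at this
  have hsurj : Function.Surjective f := by
    rintro ⟨a, b⟩
    set e : ZMod 3 → ZMod 2 := fun r => if r = 0 then a else if r = 1 then b else a + b with he
    have hdec : ∀ (a b : ZMod 2) (r : ZMod 3),
        (if r - 1 = 0 then a else if r - 1 = 1 then b else a + b) +
        (if r = 0 then a else if r = 1 then b else a + b) +
        (if r + 1 = 0 then a else if r + 1 = 1 then b else a + b) = 0 := by decide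
    have hmem : (fun i => e (ZMod.castHom h3 (ZMod 3) i)) ∈ sol Nx := by
      intro i
      have hm1 : ZMod.castHom h3 (ZMod 3) (i - 1) = ZMod.castHom h3 (ZMod 3) i - 1 := by
        rw [map_sub, map_one]
      have hp1 : ZMod.castHom h3 (ZMod 3) (i + 1) = ZMod.castHom h3 (ZMod 3) i + 1 := by
        rw [map_add, map_one]
      simp only [hm1, hp1, he]
      exact hdec a b (ZMod.castHom h3 (ZMod 3) i)
    refine ⟨⟨_, hmem⟩, ?_⟩
    have h30 : ZMod.castHom h3 (ZMod 3) 0 = 0 := map_zero _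
    have h31 : ZMod.castHom h3 (ZMod 3) 1 = 1 := map_one _
    show ((e (ZMod.castHom h3 (ZMod 3) 0), e (ZMod.castHom h3 (ZMod 3) 1)) : ZMod 2 × ZMod 2) = (a, b)
    rw [h30, h31]
    simp [he]
  have := LinearEquiv.finrank_eq (LinearEquiv.ofBijective f ⟨hinj, hsurj⟩)
  rw [this]
  simp [Module.finrank_prod]

variable (Nx Ny)

def evens := {p : ZMod Nx × ZMod Ny // ¬ Odd p.2.val}

instance : Fintype (evens Nx Ny) := by unfold evens; infer_instance

variable {Nx Ny}

lemma card_evens (h2 : 2 ∣ Ny) : Fintype.card (evens Nx Ny) = Nx * (Ny / 2) := by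
  obtain ⟨t, ht⟩ := h2
  have heq : evens Nx Ny ≃ ZMod Nx × Fin (Ny / 2) :=
    { toFun := fun p => (p.1.1, ⟨p.1.2.val / 2, by
        have hv : p.1.2.val < Ny := ZMod.val_lt _
        have hpar : p.1.2.val % 2 = 0 := by
          have := p.2
          rw [Nat.not_odd_iff_even, Nat.even_iff] at this
          exact this
        omega⟩)
      invFun := fun x => ⟨(x.1, ((2 * x.2.1 : ℕ) : ZMod Ny)), by
        rw [Nat.odd_iff, ZMod.val_natCast, Nat.mod_mod_of_dvd _ ⟨t, ht⟩]
        omega⟩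
      left_inv := by
        rintro ⟨⟨i, j⟩, hp⟩
        have hpar : j.val % 2 = 0 := by
          rw [Nat.not_odd_iff_even, Nat.even_iff] at hp
          exact hp
        have h1 : 2 * (j.val / 2) = j.val := by omega
        apply Subtype.ext
        simp only [Prod.mk.injEq]
        exact ⟨trivial, by rw [h1]; exact ZMod.natCast_rightInverse j⟩
      right_inv := by
        rintro ⟨i, ⟨m, hm⟩⟩
        simp only [Prod.mk.injEq]
        refine ⟨trivial, Fin.ext ?_⟩
        simp only
        rw [ZMod.val_natCast, Nat.mod_eq_of_lt (by omega)]
        omega }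
  rw [Fintype.card_congr heq]
  simp [ZMod.card]

variable (Nx Ny)

def rho : ((evens Nx Ny → ZMod 2) × sol Nx) →ₗ[ZMod 2] ((ZMod Nx × ZMod Ny) → ZMod 2) where
  toFun x := fun p => if h : Odd p.2.val then x.2.1 p.1 else x.1 ⟨p, h⟩
  map_add' x y := by
    funext p
    by_cases h : Odd p.2.val <;> simp [h] <;> rfl
  map_smul' r x := by
    funext p
    by_cases h : Odd p.2.val <;> simp [h] <;> rfl

variable {Nx Ny}

lemma odd_one' (hNy4 : 4 ≤ Ny) : Odd ((1 : ZMod Ny)).val := by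
  haveI : Fact (1 < Ny) := ⟨by omega⟩
  rw [ZMod.val_one]
  exact odd_one

lemma rho_inj (hNy4 : 4 ≤ Ny) : Function.Injective (rho Nx Ny) := by
  rw [← LinearMap.ker_eq_bot, LinearMap.ker_eq_bot']
  rintro ⟨e, d⟩ h
  have he : e = 0 := by
    funext pp
    obtain ⟨p, hp⟩ := pp
    have := congrFun h p
    rwa [rho, LinearMap.coe_mk, AddHom.coe_mk, dif_neg hp] at this
  have hd : d = 0 := by
    apply Subtype.ext
    funext i
    have := congrFun h (i, (1 : ZMod Ny))
    rwa [rho, LinearMap.coe_mk, AddHom.coe_mk, dif_pos (odd_one' hNy4)] at this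
  rw [he, hd]
  rfl

lemma range_rho (h2 : 2 ∣ Ny) (hNy4 : 4 ≤ Ny) :
    LinearMap.range (rho Nx Ny) = LinearMap.ker (phi Nx Ny) := by
  apply le_antisymm
  · rintro _ ⟨⟨e, d⟩, rfl⟩
    rw [LinearMap.mem_ker]
    funext q
    rw [phi_eval]
    have hop : ∀ p : ZMod Nx × ZMod Ny,
        oddPart Nx Ny (rho Nx Ny (e, d)) p = if Odd p.2.val then d.1 p.1 else 0 := by
      intro p
      by_cases h : Odd p.2.val <;> simp [oddPart, rho, h]
    simp only [hop]
    by_cases hq : Odd q.2.val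
    · have hm : ¬ Odd ((q.2 - 1)).val := by
        have := odd_succ h2 (q.2 - 1)
        rw [sub_add_cancel] at this
        exact this.mp hq
      have hp : ¬ Odd ((q.2 + 1)).val := fun hc => ((odd_succ h2 q.2).mp hc) hq
      simp only [if_pos hq, if_neg hm, if_neg hp]
      have := d.2 q.1
      show (0 : ZMod 2) + d.1 (q.1 - 1) + d.1 q.1 + d.1 (q.1 + 1) + 0 = (0 : (ZMod Nx × ZMod Ny) → ZMod 2) q
      simp only [Pi.zero_apply]
      linear_combination this
    · have hm : Odd ((q.2 - 1)).val := by
        by_contra hcon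
        have := odd_succ h2 (q.2 - 1)
        rw [sub_add_cancel] at this
        exact hq (this.mpr hcon)
      have hp : Odd ((q.2 + 1)).val := (odd_succ h2 q.2).mpr hq
      simp only [if_neg hq, if_pos hm, if_pos hp]
      show d.1 q.1 + (0 : ZMod 2) + 0 + 0 + d.1 q.1 = (0 : (ZMod Nx × ZMod Ny) → ZMod 2) q
      simp only [Pi.zero_apply]
      linear_combination CharTwo.add_self_eq_zero (d.1 q.1)
  · intro c hc
    rw [LinearMap.mem_ker] at hc
    have h0 : ∀ q : ZMod Nx × ZMod Ny,
        oddPart Nx Ny c (q.1, q.2 - 1) + oddPart Nx Ny c (q.1 - 1, q.2) + oddPart Nx Ny c q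
          + oddPart Nx Ny c (q.1 + 1, q.2) + oddPart Nx Ny c (q.1, q.2 + 1) = 0 := by
      intro q
      rw [← phi_eval, hc]
      rfl
    have step : ∀ (x : ZMod Nx) (j : ZMod Ny), Odd j.val → c (x, j) = c (x, j + 2) := by
      intro x j hj
      have he : ¬ Odd ((j + 1)).val := fun hc' => ((odd_succ h2 j).mp hc') hj
      have hj2 : Odd ((j + 2)).val := by
        have := (odd_succ h2 (j + 1)).mpr he
        rwa [add_assoc, one_add_one_eq_two] at this
      have hq := h0 (x, j + 1)
      have e1 : j + 1 - 1 = j := by ring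
      have e2 : j + 1 + 1 = j + 2 := by ring
      simp only [oddPart, e1, e2, if_pos hj, if_neg he, if_pos hj2] at hq
      have hq' : c (x, j) + c (x, j + 2) = 0 := by linear_combination hq
      linear_combination hq' - CharTwo.add_self_eq_zero (c (x, j + 2))
    have const : ∀ (x : ZMod Nx) (j : ZMod Ny), Odd j.val → c (x, j) = c (x, 1) := by
      intro x j hj
      have main : ∀ m : ℕ, c (x, ((2 * m + 1 : ℕ) : ZMod Ny)) = c (x, 1) := by
        intro m
        induction m with
        | zero => norm_num
        | succ m ih =>
          have e : ((2 * (m + 1) + 1 : ℕ) : ZMod Ny) = ((2 * m + 1 : ℕ) : ZMod Ny) + 2 := by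
            push_cast; ring
          rw [e, ← step x _ ((odd_natCast h2 (2 * m + 1)).mpr ⟨m, by omega⟩), ih]
      obtain ⟨m, hm⟩ := hj
      have hcast : ((2 * m + 1 : ℕ) : ZMod Ny) = j := by
        rw [← hm]
        exact ZMod.natCast_rightInverse j
      rw [← hcast]
      exact main m
    set d : ZMod Nx → ZMod 2 := fun i => c (i, 1) with hdd
    have hd : d ∈ sol Nx := by
      intro i
      have hq := h0 (i, (1 : ZMod Ny))
      simp only [oddPart] at hq
      have h1o : Odd ((1 : ZMod Ny)).val := odd_one' hNy4
      have h0e : ¬ Odd (((1 : ZMod Ny) - 1)).val := by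
        rw [sub_self]
        rw [ZMod.val_zero]
        decide
      have h2e : ¬ Odd (((1 : ZMod Ny) + 1)).val := fun hc' => ((odd_succ h2 1).mp hc') h1o
      rw [show ((i, (1:ZMod Ny)).1, (i, (1:ZMod Ny)).2 - 1) = (i, (1:ZMod Ny) - 1) from rfl,
        show ((i, (1:ZMod Ny)).1, (i, (1:ZMod Ny)).2 + 1) = (i, (1:ZMod Ny) + 1) from rfl,
        show ((i, (1:ZMod Ny)).1 - 1, (i, (1:ZMod Ny)).2) = (i - 1, (1:ZMod Ny)) from rfl,
        show ((i, (1:ZMod Ny)).1 + 1, (i, (1:ZMod Ny)).2) = (i + 1, (1:ZMod Ny)) from rfl] at hq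
      simp only [if_pos h1o, if_neg h0e, if_neg h2e] at hq
      linear_combination hq
    refine ⟨(fun pp => c pp.1, ⟨d, hd⟩), ?_⟩
    funext p
    rw [rho, LinearMap.coe_mk, AddHom.coe_mk]
    by_cases h : Odd p.2.val
    · rw [dif_pos h]
      show c (p.1, 1) = c p
      rw [← const p.1 p.2 h]
    · rw [dif_neg h]

lemma ker_phi (h3 : 3 ∣ Nx) (h2 : 2 ∣ Ny) (hNy4 : 4 ≤ Ny) :
    Module.finrank (ZMod 2) (LinearMap.ker (phi Nx Ny)) = Nx * (Ny / 2) + 2 := by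
  rw [← range_rho h2 hNy4, LinearMap.finrank_range_of_inj (rho_inj hNy4)]
  rw [Module.finrank_prod, Module.finrank_fintype_fun_eq_card, card_evens h2, finrank_sol h3]

end St19

/-- the `ZMod 2`-span of the odd-row cross vectors `χ_{i,j}` (`j` odd)
has dimension exactly `Nx·Ny/2 - 2`. -/
theorem statement19 (Nx Ny : ℕ) [NeZero Nx] [NeZero Ny]
    (h3 : 3 ∣ Nx) (hNx : 3 ≤ Nx) (hNy2 : Even Ny) (hNy4 : 4 ≤ Ny) :
    Module.finrank (ZMod 2)
      ↥(Submodule.span (ZMod 2)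
          {w : ZMod Nx × ZMod Ny → ZMod 2 |
            ∃ p : ZMod Nx × ZMod Ny, Odd p.2.val ∧ w = cross p}) =
      Nx * Ny / 2 - 2 := by
  classical
  have h2 : 2 ∣ Ny := hNy2.two_dvd
  have hr : Set.range (St19.fam Nx Ny) = insert 0
      {w : ZMod Nx × ZMod Ny → ZMod 2 |
        ∃ p : ZMod Nx × ZMod Ny, Odd p.2.val ∧ w = cross p} := by
    ext w
    simp only [Set.mem_range, Set.mem_insert_iff, Set.mem_setOf_eq]
    constructor
    · rintro ⟨p, rfl⟩
      by_cases h : Odd p.2.val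
      · right; exact ⟨p, h, by rw [St19.fam, if_pos h]⟩
      · left; rw [St19.fam, if_neg h]
    · rintro (rfl | ⟨p, h, rfl⟩)
      · refine ⟨((0 : ZMod Nx), (0 : ZMod Ny)), ?_⟩
        rw [St19.fam, if_neg]
        rw [ZMod.val_zero]
        decide
      · exact ⟨p, by rw [St19.fam, if_pos h]⟩
  have h1 : LinearMap.range (St19.phi Nx Ny) = Submodule.span (ZMod 2)
      {w : ZMod Nx × ZMod Ny → ZMod 2 |
        ∃ p : ZMod Nx × ZMod Ny, Odd p.2.val ∧ w = cross p} := by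
    rw [St19.phi, Fintype.range_linearCombination, hr, Submodule.span_insert_zero]
  rw [← h1]
  have hrn := LinearMap.finrank_range_add_finrank_ker (St19.phi Nx Ny)
  rw [Module.finrank_fintype_fun_eq_card, Fintype.card_prod, ZMod.card, ZMod.card,
    St19.ker_phi h3 h2 hNy4] at hrn
  obtain ⟨t, ht⟩ := hNy2
  have ht2 : Ny = 2 * t := by omega
  have h5 : Ny / 2 = t := by omega
  have h6 : Nx * Ny = 2 * (Nx * t) := by rw [ht2]; ring
  rw [h5] at hrn
  set K := Nx * t with hK
  set M := Nx * Ny with hM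
  omega
end
end
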